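/- arXiv:2109.09925 — 11 statements merged into one kernel-verified Lean document; each statement's English description precedes it below -/
import Mathlib

section
/- If A is a collection of odd-sized subsets of an n-element set such that every pair of distinct sets in A has even-sized intersection, then |A| ≤ n. -/
lemma indicator_dot (n : ℕ) (A B : Finset (Fin n)) :
    (∑ i : Fin n, (if i ∈ A then (1 : ZMod 2) else 0) * (if i ∈ B then 1 else 0))
      = ((A ∩ B).card : ZMod 2) := by
  have : ∀ i : Fin n, (if i ∈ A then (1 : ZMod 2) else 0) * (if i ∈ B then 1 else 0)
      = if i ∈ A ∩ B then 1 else 0 := by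
    intro i; by_cases hA : i ∈ A <;> by_cases hB : i ∈ B <;>
      simp [hA, hB, Finset.mem_inter]
  rw [Finset.sum_congr rfl fun i _ => this i]
  rw [Finset.sum_ite_mem]
  simp

/-- Oddtown theorem: a family of odd-sized subsets of an `n`-element set with
pairwise even-sized intersections has at most `n` members. -/
theorem oddtown (n : ℕ) (𝒜 : Finset (Finset (Fin n)))
    (hodd : ∀ A ∈ 𝒜, Odd A.card)
    (heven : ∀ A ∈ 𝒜, ∀ B ∈ 𝒜, A ≠ B → Even ((A ∩ B).card)) :
    𝒜.card ≤ n := by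
  classical
  set v : 𝒜 → (Fin n → ZMod 2) := fun A i => if i ∈ (A : Finset (Fin n)) then 1 else 0 with hv
  have hli : LinearIndependent (ZMod 2) v := by
    rw [Fintype.linearIndependent_iff]
    intro g hg B
    have h0 : ∑ A : 𝒜, g A * ∑ i : Fin n, v A i * v B i = 0 := by
      have : ∀ i : Fin n, (∑ A : 𝒜, g A • v A) i * v B i = 0 := by
        intro i; rw [hg]; simp
      calc ∑ A : 𝒜, g A * ∑ i : Fin n, v A i * v B i
          = ∑ i : Fin n, (∑ A : 𝒜, g A • v A) i * v B i := by
            simp only [Finset.sum_apply, Pi.smul_apply, smul_eq_mul, Finset.sum_mul,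
              Finset.mul_sum]
            rw [Finset.sum_comm]
            congr 1; ext A; congr 1; ext i; ring
        _ = 0 := by rw [Finset.sum_congr rfl fun i _ => this i]; simp
    have hdot : ∀ A : 𝒜, (∑ i : Fin n, v A i * v B i)
        = (((A : Finset (Fin n)) ∩ B).card : ZMod 2) := fun A =>
      indicator_dot n A B
    rw [Finset.sum_congr rfl (fun A _ => by rw [hdot])] at h0
    have hzero : ∀ A : 𝒜, A ≠ B → g A * (((A : Finset (Fin n)) ∩ B).card : ZMod 2) = 0 := by
      intro A hAB
      have : Even (((A : Finset (Fin n)) ∩ B).card) :=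
        heven A A.2 B B.2 (fun h => hAB (Subtype.ext h))
      have h2 : ((((A : Finset (Fin n)) ∩ B).card : ℕ) : ZMod 2) = 0 :=
        (ZMod.natCast_eq_zero_iff _ 2).2 this.two_dvd
      rw [h2, mul_zero]
    rw [Finset.sum_eq_single B (fun A _ h => hzero A h) (by simp)] at h0
    have hBodd : Odd ((B : Finset (Fin n)).card) := hodd B B.2
    have : (((B : Finset (Fin n)) ∩ B).card : ZMod 2) = 1 := by
      rw [Finset.inter_self]
      obtain ⟨k, hk⟩ := hBodd
      rw [hk]; push_cast; rw [show ((2:ZMod 2)) = 0 by decide]; ring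
    rw [this, mul_one] at h0
    exact h0
  have := hli.fintype_card_le_finrank (R := ZMod 2)
  simpa using this
end

section
/- If A is a collection of even-sized subsets of an n-element set such that every pair of sets in A (including a set with itself, which is automatic) has even-sized intersection, then |A| ≤ 2^⌊n/2⌋. -/
open LinearMap Module

/-- Eventown theorem: a family of even-sized subsets of an `n`-element set with
all pairwise intersections of even size has at most `2^⌊n/2⌋` members. -/
theorem eventown (n : ℕ) (𝒜 : Finset (Finset (Fin n)))
    (heven : ∀ A ∈ 𝒜, Even A.card)
    (hint : ∀ A ∈ 𝒜, ∀ B ∈ 𝒜, Even ((A ∩ B).card)) :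
    𝒜.card ≤ 2 ^ (n / 2) := by
  classical
  -- indicator vectors
  let v : Finset (Fin n) → (Fin n → ZMod 2) := fun A i => if i ∈ A then 1 else 0
  have hvinj : Function.Injective v := by
    intro A C h
    ext i
    have := congrFun h i
    by_cases hA : i ∈ A <;> by_cases hC : i ∈ C <;> simp_all [v]
  -- the standard bilinear form
  let B : LinearMap.BilinForm (ZMod 2) (Fin n → ZMod 2) := Matrix.toBilin' 1
  have hBapp : ∀ x y, B x y = ∑ i, x i * y i := by
    intro x y
    simp [B, Matrix.toBilin'_apply', dotProduct]
  have hBcard : ∀ A C : Finset (Fin n), B (v A) (v C) = ((A ∩ C).card : ZMod 2) := by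
    intro A C
    rw [hBapp]
    have : ∀ i : Fin n, v A i * v C i = if i ∈ A ∩ C then 1 else 0 := by
      intro i
      by_cases hA : i ∈ A <;> by_cases hC : i ∈ C <;> simp_all [v]
    rw [Finset.sum_congr rfl fun i _ => this i]
    simp only [Finset.sum_ite_mem, Finset.univ_inter]
    simp
  have hrefl : B.IsRefl := by
    intro x y h
    rw [hBapp] at h ⊢
    simpa [mul_comm] using h
  have hnondeg : B.Nondegenerate := by
    apply LinearMap.BilinForm.nondegenerate_toBilin'_of_det_ne_zero'
    simp
  set W : Submodule (ZMod 2) (Fin n → ZMod 2) := Submodule.span (ZMod 2) (v '' 𝒜) with hW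
  -- W is self-orthogonal
  have horth : W ≤ B.orthogonal W := by
    rw [hW, Submodule.span_le]
    rintro _ ⟨A, hA, rfl⟩
    rw [SetLike.mem_coe, ← hW, LinearMap.BilinForm.mem_orthogonal_iff]
    intro m hm
    have hker : W ≤ LinearMap.ker (B.flip (v A)) := by
      rw [hW, Submodule.span_le]
      rintro _ ⟨C, hC, rfl⟩
      have : B (v C) (v A) = 0 := by
        rw [hBcard]
        exact (ZMod.natCast_eq_zero_iff _ 2).2
          ((hint C hC A hA).two_dvd)
      simpa [LinearMap.mem_ker]
    exact hker hm
  -- dimension bound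
  have hdim : finrank (ZMod 2) W ≤ n / 2 := by
    have h1 : finrank (ZMod 2) W ≤ finrank (ZMod 2) (B.orthogonal W) :=
      Submodule.finrank_mono horth
    have h2 : finrank (ZMod 2) (B.orthogonal W) =
        finrank (ZMod 2) (Fin n → ZMod 2) - finrank (ZMod 2) W :=
      LinearMap.BilinForm.finrank_orthogonal hnondeg W
    have h3 : finrank (ZMod 2) (Fin n → ZMod 2) = n := by simp
    omega
  -- counting
  have hcard : 𝒜.card ≤ Fintype.card W := by
    rw [← Fintype.card_coe]
    apply Fintype.card_le_of_injective
      (fun A => ⟨v A.1, Submodule.subset_span ⟨A.1, A.2, rfl⟩⟩)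
    intro A C h
    exact Subtype.ext (hvinj (congrArg Subtype.val h))
  have hcard2 : Fintype.card W = 2 ^ finrank (ZMod 2) W := by
    have := card_eq_pow_finrank (K := ZMod 2) (V := W)
    simpa using this
  calc 𝒜.card ≤ 2 ^ finrank (ZMod 2) W := hcard2 ▸ hcard
    _ ≤ 2 ^ (n / 2) := Nat.pow_le_pow_right (by norm_num) hdim
end

section
/- Let A be a collection of even-sized subsets of an n-element set with |A| ≥ 2^⌊n/2⌋ + 2. Then the number of distinct pairs {A,B} of sets from A with |A ∩ B| odd is at least 2^⌊n/2⌋. -/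
open Finset

namespace EvtSup

variable {n : ℕ}


variable {n : ℕ}

abbrev Vec (n : ℕ) := Fin n → ZMod 2

/-- The standard dot-product bilinear pairing over `ZMod 2`. -/
def bf (u v : Vec n) : ZMod 2 := ∑ i, u i * v i

lemma bf_symm (u v : Vec n) : bf u v = bf v u := by
  simp [bf, mul_comm]

lemma bf_add_left (u v w : Vec n) : bf (u + v) w = bf u w + bf v w := by
  simp [bf, add_mul, Finset.sum_add_distrib]

lemma bf_add_right (u v w : Vec n) : bf u (v + w) = bf u v + bf u w := by
  simp [bf, mul_add, Finset.sum_add_distrib]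

lemma bf_zero_left (w : Vec n) : bf 0 w = 0 := by simp [bf]

lemma bf_zero_right (w : Vec n) : bf w 0 = 0 := by simp [bf]

lemma bf_sum_left {α : Type*} [DecidableEq α] (s : Finset α) (f : α → Vec n) (w : Vec n) :
    bf (∑ a ∈ s, f a) w = ∑ a ∈ s, bf (f a) w := by
  induction s using Finset.cons_induction with
  | empty => simp [bf_zero_left]
  | cons a s ha ih => rw [Finset.sum_cons, Finset.sum_cons, bf_add_left, ih]

lemma bf_sum_right {α : Type*} [DecidableEq α] (s : Finset α) (f : α → Vec n) (w : Vec n) :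
    bf w (∑ a ∈ s, f a) = ∑ a ∈ s, bf w (f a) := by
  rw [bf_symm, bf_sum_left]
  exact Finset.sum_congr rfl fun a _ => bf_symm _ _

lemma zmod2_cases (a : ZMod 2) : a = 0 ∨ a = 1 := by
  fin_cases a
  · exact Or.inl rfl
  · exact Or.inr rfl

lemma bf_smul_left (c : ZMod 2) (u w : Vec n) : bf (c • u) w = c * bf u w := by
  simp [bf, Finset.mul_sum, mul_assoc]

lemma bf_smul_right (c : ZMod 2) (u w : Vec n) : bf u (c • w) = c * bf u w := by
  simp only [bf, Pi.smul_apply, smul_eq_mul, Finset.mul_sum]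
  exact Finset.sum_congr rfl fun i _ => by ring

lemma bf_eq_zero_of_ne_one {u v : Vec n} (h : ¬ bf u v = 1) : bf u v = 0 := by
  rcases zmod2_cases (bf u v) with h0 | h1
  · exact h0
  · exact absurd h1 h

/-- The bilinear form as a Mathlib `BilinForm`. -/
noncomputable def BF : LinearMap.BilinForm (ZMod 2) (Vec n) :=
  LinearMap.mk₂ (ZMod 2) bf
    (fun u v w => bf_add_left u v w)
    (fun c u w => bf_smul_left c u w)
    (fun u v w => bf_add_right u v w)
    (fun c u w => bf_smul_right c u w)

@[simp] lemma BF_apply (u v : Vec n) : BF u v = bf u v := rfl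

lemma BF_nondeg : (BF (n := n)).Nondegenerate := by
  constructor <;>
  · intro x hx
    funext i
    have := hx (Pi.single i 1)
    simpa [bf, Pi.single_apply, Finset.sum_ite_eq', mul_comm] using this

lemma BF_refl : (BF (n := n)).IsRefl := by
  intro x y h
  simpa [bf_symm x y] using h

/-- **Eventown bound**: a family of vectors that is pairwise orthogonal
(including self-orthogonal) has at most `2 ^ (n / 2)` members. -/
lemma eventown_bound (F : Finset (Vec n)) (h : ∀ u ∈ F, ∀ v ∈ F, bf u v = 0) :
    F.card ≤ 2 ^ (n / 2) := by
  classical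
  set W : Submodule (ZMod 2) (Vec n) := Submodule.span (ZMod 2) (F : Set (Vec n)) with hW
  -- every element of W is orthogonal to every element of W
  have key1 : ∀ w ∈ W, ∀ v ∈ F, bf w v = 0 := by
    intro w hw
    refine Submodule.span_induction (p := fun w _ => ∀ v ∈ F, bf w v = 0) ?_ ?_ ?_ ?_ hw
    · intro x hx v hv; exact h x hx v hv
    · intro v hv; exact bf_zero_left v
    · intro x y _ _ hx hy v hv
      rw [bf_add_left, hx v hv, hy v hv, add_zero]
    · intro c x _ hx v hv
      rw [bf_smul_left, hx v hv, mul_zero]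
  have key : ∀ w ∈ W, ∀ w' ∈ W, bf w w' = 0 := by
    intro w hw w' hw'
    refine Submodule.span_induction (p := fun w' _ => bf w w' = 0) ?_ ?_ ?_ ?_ hw'
    · intro x hx
      exact key1 w hw x hx
    · exact bf_zero_right w
    · intro x y _ _ hx hy
      rw [bf_add_right, hx, hy, add_zero]
    · intro c x _ hx
      rw [bf_smul_right, hx, mul_zero]
  -- W is contained in its own orthogonal complement
  have hle : W ≤ BF.orthogonal W := by
    intro x hx
    rw [LinearMap.BilinForm.mem_orthogonal_iff]
    intro m hm
    exact key m hm x hx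
  have horth := LinearMap.BilinForm.finrank_orthogonal (B := BF (n := n)) BF_nondeg W
  have hVn : Module.finrank (ZMod 2) (Vec n) = n := by
    simp [Module.finrank_pi]
  have hmono : Module.finrank (ZMod 2) W ≤ Module.finrank (ZMod 2) (BF.orthogonal W) :=
    Submodule.finrank_mono hle
  have hWle : Module.finrank (ZMod 2) W ≤ Module.finrank (ZMod 2) (Vec n) :=
    Submodule.finrank_le W
  have hdim : Module.finrank (ZMod 2) W ≤ n / 2 := by
    rw [horth, hVn] at hmono
    rw [hVn] at hWle
    omega
  -- now count
  have hcard1 : F.card ≤ Fintype.card W := by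
    have : Fintype.card F ≤ Fintype.card W := by
      refine Fintype.card_le_of_injective
        (fun v => ⟨v.1, Submodule.subset_span v.2⟩) ?_
      intro a b hab
      have h2 : (a : Vec n) = (b : Vec n) :=
        congrArg (fun z : W => (z : Vec n)) hab
      exact Subtype.ext h2
    simpa [Fintype.card_coe] using this
  have hcard2 : Fintype.card W = 2 ^ Module.finrank (ZMod 2) W := by
    have := Module.card_eq_pow_finrank (K := ZMod 2) (V := W)
    simpa [ZMod.card] using this
  calc F.card ≤ 2 ^ Module.finrank (ZMod 2) W := by rw [← hcard2]; exact hcard1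
    _ ≤ 2 ^ (n / 2) := Nat.pow_le_pow_right (by norm_num) hdim



variable {n : ℕ}

/-- There is a maximum-cardinality subset satisfying a property that holds for `∅`. -/
lemma exists_max_subset {γ : Type*} [DecidableEq γ] (s : Finset γ) (P : Finset γ → Prop)
    [DecidablePred P] (h0 : P ∅) :
    ∃ B, B ⊆ s ∧ P B ∧ ∀ C, C ⊆ s → P C → C.card ≤ B.card := by
  classical
  have hne : (s.powerset.filter P).Nonempty :=
    ⟨∅, by simp [Finset.mem_filter, Finset.empty_mem_powerset, h0]⟩
  obtain ⟨B, hB, hmax⟩ := Finset.exists_max_image (s.powerset.filter P) Finset.card hne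
  rw [Finset.mem_filter, Finset.mem_powerset] at hB
  refine ⟨B, hB.1, hB.2, fun C hCs hPC => ?_⟩
  exact hmax C (by rw [Finset.mem_filter, Finset.mem_powerset]; exact ⟨hCs, hPC⟩)

/-- Counting ordered pairs fiberwise by first coordinate. -/
lemma count_pairs (A : Finset (Vec n)) :
    (A.offDiag.filter fun p => bf p.1 p.2 = 1).card
      = ∑ x ∈ A, (A.filter fun z => z ≠ x ∧ bf x z = 1).card := by
  classical
  rw [Finset.card_eq_sum_card_fiberwise
    (f := Prod.fst) (t := A)
    (fun p hp => by
      rw [Finset.mem_coe, Finset.mem_filter, Finset.mem_offDiag] at hp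
      exact hp.1.1)]
  refine Finset.sum_congr rfl fun x hx => ?_
  refine Finset.card_bij (fun p _ => p.2) ?_ ?_ ?_
  · intro p hp
    simp only [Finset.mem_filter, Finset.mem_offDiag] at hp
    obtain ⟨⟨⟨h1, h2, h3⟩, h4⟩, h5⟩ := hp
    subst h5
    exact Finset.mem_filter.2 ⟨h2, fun he => h3 he.symm, h4⟩
  · intro p hp q hq hpq
    simp only [Finset.mem_filter] at hp hq
    exact Prod.ext (hp.2.trans hq.2.symm) hpq
  · intro z hz
    rw [Finset.mem_filter] at hz
    refine ⟨(x, z), ?_, rfl⟩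
    simp only [Finset.mem_filter, Finset.mem_offDiag]
    exact ⟨⟨⟨hx, hz.1, fun he => hz.2.1 he.symm⟩, hz.2.2⟩, trivial⟩

/-- Double counting of odd cross pairs. -/
lemma double_count (S T : Finset (Vec n)) :
    ∑ s ∈ S, (T.filter fun t => bf s t = 1).card
      = ∑ t ∈ T, (S.filter fun s => bf s t = 1).card := by
  classical
  simp only [Finset.card_filter]
  exact Finset.sum_comm

/-- quadratic arithmetic for the large-`b` case -/
lemma quad_arith {M b : ℕ} (h1 : M + 4 ≤ 2 * b) (h2 : b ≤ M) :
    2 * M ≤ (M + 2 - b) * (2 * b - M) := by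
  set w := M - b with hwdef
  have hM : 2 * w + 4 ≤ M := by omega
  have h2w : 2 * w ≤ M := by omega
  have e1 : M + 2 - b = w + 2 := by omega
  have e2 : 2 * b - M = M - 2 * w := by omega
  rw [e1, e2]
  zify [h2w]
  have hw0 : (0:ℤ) ≤ (w:ℤ) := by positivity
  have hM4 : (0:ℤ) ≤ (M:ℤ) - 2 * (w:ℤ) - 4 := by omega
  nlinarith [mul_nonneg hw0 hM4]

/-- the key power inequality: `3s + 2^(k+1) ≤ 2^(s+k) + 4` for `s ≥ 1` -/
lemma pow_arith : ∀ s, 1 ≤ s → ∀ k, 3 * s + 2 ^ (k + 1) ≤ 2 ^ (s + k) + 4 := by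
  intro s hs
  induction s with
  | zero => omega
  | succ m ih =>
    intro k
    rcases Nat.eq_or_lt_of_le hs with h1 | h2
    · -- s = 1
      have hm0 : m = 0 := by omega
      subst hm0
      have e : 1 + k = k + 1 := by omega
      rw [e]
      omega
    · have hm : 1 ≤ m := by omega
      have h3 := ih hm k
      have hpow : 3 ≤ 2 ^ (m + k) ∨ (m = 1 ∧ k = 0) := by
        rcases Nat.lt_or_ge (m + k) 2 with h | h
        · have : m = 1 ∧ k = 0 := by omega
          exact Or.inr this
        · left
          calc (3:ℕ) ≤ 2 ^ 2 := by norm_num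
          _ ≤ 2 ^ (m + k) := Nat.pow_le_pow_right (by norm_num) h
      rcases hpow with h4 | ⟨hm1, hk0⟩
      · have e : m + 1 + k = (m + k) + 1 := by omega
        have e2 : 2 ^ (m + 1 + k) = 2 ^ (m + k) * 2 := by rw [e, pow_succ]
        omega
      · subst hm1; subst hk0; norm_num



variable {n : ℕ}

set_option maxHeartbeats 1000000 in
lemma case_b (A B : Finset (Vec n)) (hA0 : ∀ v ∈ A, bf v v = 0)
    (hBA : B ⊆ A) (hBev : ∀ u ∈ B, ∀ v ∈ B, bf u v = 0)
    (hBmax : ∀ C, C ⊆ A → (∀ u ∈ C, ∀ v ∈ C, bf u v = 0) → C.card ≤ B.card)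
    (hodd : ∀ x ∈ A \ B, ∃ q ∈ B, bf x q = 1)
    (hN : 2 ^ (n / 2) + 2 ≤ A.card)
    (hcase : 2 * B.card < 2 ^ (n / 2) + 4) :
    2 * 2 ^ (n / 2) ≤ ∑ x ∈ A, (A.filter fun z => z ≠ x ∧ bf x z = 1).card := by
  classical
  set M := 2 ^ (n / 2) with hMdef
  set b := B.card with hbdef
  set Abar := A \ B with hAbardef
  set f : Vec n → ℕ := fun x => (A.filter fun z => z ≠ x ∧ bf x z = 1).card with hfdef
  set r : Vec n → Finset (Vec n) := fun x => B.filter fun q => bf x q = 1 with hrdef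
  set T := Abar.image r with hTdef
  set X : Finset (Vec n) → Finset (Vec n) := fun t => Abar.filter fun x => r x = t with hXdef
  have hXsub : ∀ t, X t ⊆ Abar := fun t => Finset.filter_subset _ _
  have hrX : ∀ t, ∀ x ∈ X t, r x = t := by
    intro t x hx; exact (Finset.mem_filter.1 hx).2
  have hmemX : ∀ x ∈ Abar, x ∈ X (r x) := by
    intro x hx; exact Finset.mem_filter.2 ⟨hx, rfl⟩
  have hrT : ∀ x ∈ Abar, r x ∈ T := fun x hx => Finset.mem_image_of_mem r hx
  have htsubB : ∀ t ∈ T, t ⊆ B := by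
    intro t ht
    obtain ⟨x, _, rfl⟩ := Finset.mem_image.1 ht
    exact Finset.filter_subset _ _
  have hrmem : ∀ x, ∀ q ∈ r x, bf x q = 1 := by
    intro x q hq; exact (Finset.mem_filter.1 hq).2
  have hrnot : ∀ x, ∀ q ∈ B, q ∉ r x → bf x q = 0 := by
    intro x q hq hnq
    apply bf_eq_zero_of_ne_one
    intro h1
    exact hnq (Finset.mem_filter.2 ⟨hq, h1⟩)
  -- the maximal even subset of each class
  have Ych : ∀ t : Finset (Vec n), ∃ Y, Y ⊆ X t ∧ (∀ u ∈ Y, ∀ v ∈ Y, bf u v = 0) ∧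
      ∀ C, C ⊆ X t → (∀ u ∈ C, ∀ v ∈ C, bf u v = 0) → C.card ≤ Y.card := by
    intro t
    exact exists_max_subset (X t) (fun C => ∀ u ∈ C, ∀ v ∈ C, bf u v = 0) (by simp)
  set Y : Finset (Vec n) → Finset (Vec n) := fun t => (Ych t).choose with hYdef
  have hYsub : ∀ t, Y t ⊆ X t := fun t => (Ych t).choose_spec.1
  have hYev : ∀ t, ∀ u ∈ Y t, ∀ v ∈ Y t, bf u v = 0 := fun t => (Ych t).choose_spec.2.1
  have hYmax : ∀ t, ∀ C, C ⊆ X t → (∀ u ∈ C, ∀ v ∈ C, bf u v = 0) → C.card ≤ (Y t).card :=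
    fun t => (Ych t).choose_spec.2.2
  -- |Y t| ≤ |t| for classes
  have hYd : ∀ t ∈ T, (Y t).card ≤ t.card := by
    intro t ht
    have hsub : (B \ t) ∪ Y t ⊆ A := by
      intro z hz
      rcases Finset.mem_union.1 hz with hz | hz
      · exact hBA (Finset.mem_sdiff.1 hz).1
      · exact (Finset.mem_sdiff.1 (hXsub t (hYsub t hz))).1
    have hdisj : Disjoint (B \ t) (Y t) := by
      rw [Finset.disjoint_right]
      intro z hz hz2
      exact (Finset.mem_sdiff.1 (hXsub t (hYsub t hz))).2 (Finset.mem_sdiff.1 hz2).1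
    have hev : ∀ u ∈ (B \ t) ∪ Y t, ∀ v ∈ (B \ t) ∪ Y t, bf u v = 0 := by
      intro u hu v hv
      rcases Finset.mem_union.1 hu with hu' | hu' <;> rcases Finset.mem_union.1 hv with hv' | hv'
      · exact hBev u (Finset.mem_sdiff.1 hu').1 v (Finset.mem_sdiff.1 hv').1
      · -- u ∈ B \ t, v ∈ Y t
        have hrv : r v = t := hrX t v (hYsub t hv')
        have hu2 := Finset.mem_sdiff.1 hu'
        have : bf v u = 0 := by
          apply hrnot v u hu2.1
          rw [hrv]; exact hu2.2
        rw [bf_symm]; exact this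
      · have hru : r u = t := hrX t u (hYsub t hu')
        have hv2 := Finset.mem_sdiff.1 hv'
        apply hrnot u v hv2.1
        rw [hru]; exact hv2.2
      · exact hYev t u hu' v hv'
    have hcb := hBmax _ hsub hev
    rw [Finset.card_union_of_disjoint hdisj, Finset.card_sdiff_of_subset (htsubB t ht)] at hcb
    have := Finset.card_le_card (htsubB t ht)
    omega
  -- partner function within classes
  set yf : Vec n → Vec n :=
    fun x => if h : ∃ y, y ∈ Y (r x) ∧ bf x y = 1 then h.choose else 0 with hyfdef
  have hyf : ∀ x ∈ Abar, x ∉ Y (r x) → yf x ∈ Y (r x) ∧ bf x (yf x) = 1 := by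
    intro x hx hnx
    have hex : ∃ y, y ∈ Y (r x) ∧ bf x y = 1 := by
      by_contra hcon
      push_neg at hcon
      have hall : ∀ y ∈ Y (r x), bf x y = 0 := fun y hy => bf_eq_zero_of_ne_one (hcon y hy)
      have hins : insert x (Y (r x)) ⊆ X (r x) :=
        Finset.insert_subset (hmemX x hx) (hYsub (r x))
      have hev : ∀ u ∈ insert x (Y (r x)), ∀ v ∈ insert x (Y (r x)), bf u v = 0 := by
        intro u hu v hv
        rcases Finset.mem_insert.1 hu with rfl | hu' <;>
          rcases Finset.mem_insert.1 hv with hveq | hv'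
        · rw [hveq]; exact hA0 u (Finset.mem_sdiff.1 hx).1
        · exact hall v hv'
        · rw [hveq, bf_symm]; exact hall u hu'
        · exact hYev (r x) u hu' v hv'
      have := hYmax (r x) _ hins hev
      rw [Finset.card_insert_of_notMem hnx] at this
      omega
    rw [hyfdef]
    simp only [hex, dif_pos]
    exact hex.choose_spec
  -- representatives of classes
  have hXne : ∀ t ∈ T, (X t).Nonempty := by
    intro t ht
    obtain ⟨x, hx, rfl⟩ := Finset.mem_image.1 ht
    exact ⟨x, hmemX x hx⟩
  set rep : Finset (Vec n) → Vec n :=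
    fun t => if h : (X t).Nonempty then h.choose else 0 with hrepdef
  have hrep : ∀ t ∈ T, rep t ∈ X t := by
    intro t ht
    have h := hXne t ht
    rw [hrepdef]
    simp only [h, dif_pos]
    exact h.choose_spec
  have hrepinj : ∀ t ∈ T, ∀ u ∈ T, rep t = rep u → t = u := by
    intro t ht u hu he
    have h1 := hrX t (rep t) (hrep t ht)
    have h2 := hrX u (rep u) (hrep u hu)
    rw [← h1, ← h2, he]
  -- deficit classes
  set D1 := T.filter (fun t => t.card = 1) with hD1def
  have hD1T : D1 ⊆ T := Finset.filter_subset _ _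
  -- the singleton element of a deficit class
  set pp : Finset (Vec n) → Vec n :=
    fun t => if h : t.card = 1 then (Finset.card_eq_one.1 h).choose else 0 with hppdef
  have hpp : ∀ t ∈ D1, t = {pp t} := by
    intro t ht
    have h : t.card = 1 := (Finset.mem_filter.1 ht).2
    rw [hppdef]
    simp only [h, dif_pos]
    exact (Finset.card_eq_one.1 h).choose_spec
  have hppinj : ∀ t ∈ D1, ∀ u ∈ D1, pp t = pp u → t = u := by
    intro t ht u hu he
    rw [hpp t ht, hpp u hu, he]
  have hppB : ∀ t ∈ D1, pp t ∈ B := by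
    intro t ht
    have hms : pp t ∈ ({pp t} : Finset (Vec n)) := Finset.mem_singleton_self _
    rw [← hpp t ht] at hms
    exact htsubB t (hD1T ht) hms
  -- maximal pairwise-even system of representatives of deficit classes
  obtain ⟨SS, hSSD1, hSSev, hSSmax⟩ :=
    exists_max_subset D1
      (fun Ss => ∀ t ∈ Ss, ∀ u ∈ Ss, t ≠ u → bf (rep t) (rep u) = 0) (by simp)
  set s := SS.card with hsdef
  -- each deficit class outside SS has a partner in SS
  have hptr : ∀ t ∈ D1 \ SS, ∃ u ∈ SS, bf (rep t) (rep u) = 1 := by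
    intro t ht
    rw [Finset.mem_sdiff] at ht
    by_contra hcon
    push_neg at hcon
    have hall : ∀ u ∈ SS, bf (rep t) (rep u) = 0 :=
      fun u hu => bf_eq_zero_of_ne_one (hcon u hu)
    have hins : insert t SS ⊆ D1 := Finset.insert_subset ht.1 hSSD1
    have hev : ∀ t' ∈ insert t SS, ∀ u ∈ insert t SS, t' ≠ u → bf (rep t') (rep u) = 0 := by
      intro t' ht' u hu hne
      rcases Finset.mem_insert.1 ht' with rfl | ht'' <;>
        rcases Finset.mem_insert.1 hu with hueq | hu''
      · exact absurd hueq.symm hne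
      · exact hall u hu''
      · rw [hueq, bf_symm]; exact hall t' ht''
      · exact hSSev t' ht'' u hu'' hne
    have := hSSmax _ hins hev
    rw [Finset.card_insert_of_notMem ht.2] at this
    omega
  set ptr : Finset (Vec n) → Finset (Vec n) :=
    fun t => if h : ∃ u, u ∈ SS ∧ bf (rep t) (rep u) = 1 then h.choose else ∅ with hptrdef
  have hptrspec : ∀ t ∈ D1 \ SS, ptr t ∈ SS ∧ bf (rep t) (rep (ptr t)) = 1 := by
    intro t ht
    obtain ⟨u, hu, hbu⟩ := hptr t ht
    have hex : ∃ u, u ∈ SS ∧ bf (rep t) (rep u) = 1 := ⟨u, hu, hbu⟩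
    rw [hptrdef]
    simp only [hex, dif_pos]
    exact hex.choose_spec
  -- key bilinear evaluations
  have hbfreppp : ∀ t ∈ SS, ∀ u ∈ SS, bf (rep t) (pp u) = if t = u then 1 else 0 := by
    intro t ht u hu
    by_cases he : t = u
    · subst he
      rw [if_pos rfl]
      apply hrmem (rep t)
      have h1 : r (rep t) = t := hrX t (rep t) (hrep t (hD1T (hSSD1 ht)))
      rw [h1]
      have hms : pp t ∈ ({pp t} : Finset (Vec n)) := Finset.mem_singleton_self _
      rw [← hpp t (hSSD1 ht)] at hms
      exact hms
    · rw [if_neg he]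
      apply hrnot (rep t) (pp u) (hppB u (hSSD1 hu))
      have h1 : r (rep t) = t := hrX t (rep t) (hrep t (hD1T (hSSD1 ht)))
      rw [h1, hpp t (hSSD1 ht)]
      intro hmem
      rw [Finset.mem_singleton] at hmem
      exact he (hppinj t (hSSD1 ht) u (hSSD1 hu) hmem.symm)
  -- evaluation of sums against pp u
  have hsum_eval : ∀ Ss, Ss ⊆ SS → ∀ u ∈ SS,
      bf (∑ t ∈ Ss, rep t) (pp u) = if u ∈ Ss then 1 else 0 := by
    intro Ss hSs u hu
    rw [bf_sum_left]
    have : ∀ t ∈ Ss, bf (rep t) (pp u) = if t = u then 1 else 0 :=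
      fun t ht => hbfreppp t (hSs ht) u hu
    rw [Finset.sum_congr rfl this, Finset.sum_ite_eq' Ss u (fun _ => (1 : ZMod 2))]
  -- sums of representatives are pairwise even
  have hsum_even : ∀ Ss, Ss ⊆ SS → ∀ Ts, Ts ⊆ SS →
      bf (∑ t ∈ Ss, rep t) (∑ t ∈ Ts, rep t) = 0 := by
    intro Ss hSs Ts hTs
    rw [bf_sum_left]
    apply Finset.sum_eq_zero
    intro t ht
    rw [bf_sum_right]
    apply Finset.sum_eq_zero
    intro u hu
    by_cases he : t = u
    · subst he
      exact hA0 (rep t) ((Finset.mem_sdiff.1 (hXsub t (hrep t (hD1T (hSSD1 (hSs ht)))))).1)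
    · exact hSSev t (hSs ht) u (hTs hu) he
  -- injectivity of subset sums, tested against the pp's
  have hsuminj : ∀ Ss ∈ SS.powerset, ∀ Ts ∈ SS.powerset,
      (∑ t ∈ Ss, rep t) = (∑ t ∈ Ts, rep t) → Ss = Ts := by
    intro Ss hSs Ts hTs he
    rw [Finset.mem_powerset] at hSs hTs
    ext u
    constructor
    · intro hu
      have h1 := hsum_eval Ss hSs u (hSs hu)
      have h2 := hsum_eval Ts hTs u (hSs hu)
      rw [he, h2] at h1
      rw [if_pos hu] at h1
      by_contra hnu
      rw [if_neg hnu] at h1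
      exact one_ne_zero h1.symm
    · intro hu
      have h1 := hsum_eval Ss hSs u (hTs hu)
      have h2 := hsum_eval Ts hTs u (hTs hu)
      rw [he, h2] at h1
      rw [if_pos hu] at h1
      by_contra hnu
      rw [if_neg hnu] at h1
      exact one_ne_zero h1
  -- G-family : 2^s ≤ M
  have hG : 2 ^ s ≤ M := by
    set G := SS.powerset.image (fun Ss => ∑ t ∈ Ss, rep t) with hGdef
    have hcardG : G.card = 2 ^ s := by
      rw [hGdef, Finset.card_image_of_injOn hsuminj, Finset.card_powerset]
    have hGev : ∀ u ∈ G, ∀ v ∈ G, bf u v = 0 := by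
      intro u hu v hv
      obtain ⟨Ss, hSs, rfl⟩ := Finset.mem_image.1 hu
      obtain ⟨Ts, hTs, rfl⟩ := Finset.mem_image.1 hv
      rw [Finset.mem_powerset] at hSs hTs
      exact hsum_even Ss hSs Ts hTs
    rw [← hcardG]
    exact eventown_bound G hGev
  -- s ≤ b
  have hsb : s ≤ b := by
    have himg : SS.image pp ⊆ B := by
      intro z hz
      obtain ⟨t, ht, rfl⟩ := Finset.mem_image.1 hz
      exact hppB t (hSSD1 ht)
    have hcardimg : (SS.image pp).card = s := by
      rw [hsdef]
      apply Finset.card_image_of_injOn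
      intro t ht u hu he
      exact hppinj t (hSSD1 ht) u (hSSD1 hu) he
    rw [← hcardimg]
    exact Finset.card_le_card himg
  -- E-family : (b - s) * 2^s ≤ M
  have hE : (b - s) * 2 ^ s ≤ M := by
    set B' := B \ SS.image pp with hB'def
    have hcardB' : B'.card = b - s := by
      rw [hB'def, Finset.card_sdiff_of_subset]
      · congr 1
        apply Finset.card_image_of_injOn
        intro t ht u hu he
        exact hppinj t (hSSD1 ht) u (hSSD1 hu) he
      · intro z hz
        obtain ⟨t, ht, rfl⟩ := Finset.mem_image.1 hz
        exact hppB t (hSSD1 ht)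
    have hqnotpp : ∀ q ∈ B', ∀ t ∈ SS, bf (rep t) q = 0 := by
      intro q hq t ht
      rw [hB'def, Finset.mem_sdiff] at hq
      apply hrnot (rep t) q hq.1
      have h1 : r (rep t) = t := hrX t (rep t) (hrep t (hD1T (hSSD1 ht)))
      rw [h1, hpp t (hSSD1 ht)]
      intro hmem
      rw [Finset.mem_singleton] at hmem
      exact hq.2 (Finset.mem_image.2 ⟨t, ht, hmem.symm⟩)
    set E := (B' ×ˢ SS.powerset).image (fun z => z.1 + ∑ t ∈ z.2, rep t) with hEdef
    have hEinj : ∀ z ∈ B' ×ˢ SS.powerset, ∀ w ∈ B' ×ˢ SS.powerset,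
        (z.1 + ∑ t ∈ z.2, rep t) = (w.1 + ∑ t ∈ w.2, rep t) → z = w := by
      intro z hz w hw he
      rw [Finset.mem_product] at hz hw
      have hz2 := Finset.mem_powerset.1 hz.2
      have hw2 := Finset.mem_powerset.1 hw.2
      have hS : z.2 = w.2 := by
        ext u
        by_cases huSS : u ∈ SS
        case neg =>
          constructor
          · intro hu; exact absurd (hz2 hu) huSS
          · intro hu; exact absurd (hw2 hu) huSS
        case pos =>
          have e1 : bf (z.1 + ∑ t ∈ z.2, rep t) (pp u)
              = bf (w.1 + ∑ t ∈ w.2, rep t) (pp u) := by rw [he]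
          rw [bf_add_left, bf_add_left] at e1
          have ez : bf z.1 (pp u) = 0 := hBev z.1 ((Finset.mem_sdiff.1 hz.1).1)
            (pp u) (hppB u (hSSD1 huSS))
          have ew : bf w.1 (pp u) = 0 := hBev w.1 ((Finset.mem_sdiff.1 hw.1).1)
            (pp u) (hppB u (hSSD1 huSS))
          rw [ez, ew, zero_add, zero_add, hsum_eval z.2 hz2 u huSS,
            hsum_eval w.2 hw2 u huSS] at e1
          constructor
          · intro hu2
            rw [if_pos hu2] at e1
            by_contra hnu
            rw [if_neg hnu] at e1
            exact one_ne_zero e1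
          · intro hu2
            rw [if_pos hu2] at e1
            by_contra hnu
            rw [if_neg hnu] at e1
            exact one_ne_zero e1.symm
      have hq : z.1 = w.1 := by
        rw [hS] at he
        exact add_right_cancel he
      exact Prod.ext hq hS
    have hcardE : E.card = (b - s) * 2 ^ s := by
      rw [hEdef, Finset.card_image_of_injOn hEinj, Finset.card_product,
        Finset.card_powerset, hcardB', hsdef]
    have hEev : ∀ u ∈ E, ∀ v ∈ E, bf u v = 0 := by
      intro u hu v hv
      obtain ⟨z, hz, rfl⟩ := Finset.mem_image.1 hu
      obtain ⟨w, hw, rfl⟩ := Finset.mem_image.1 hv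
      rw [Finset.mem_product] at hz hw
      have hz2 := Finset.mem_powerset.1 hz.2
      have hw2 := Finset.mem_powerset.1 hw.2
      have hz1B : z.1 ∈ B := (Finset.mem_sdiff.1 hz.1).1
      have hw1B : w.1 ∈ B := (Finset.mem_sdiff.1 hw.1).1
      rw [bf_add_left, bf_add_right, bf_add_right]
      have e1 : bf z.1 w.1 = 0 := hBev _ hz1B _ hw1B
      have e2 : bf z.1 (∑ t ∈ w.2, rep t) = 0 := by
        rw [bf_sum_right]
        apply Finset.sum_eq_zero
        intro t ht
        rw [bf_symm]
        exact hqnotpp z.1 hz.1 t (hw2 ht)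
      have e3 : bf (∑ t ∈ z.2, rep t) w.1 = 0 := by
        rw [bf_sum_left]
        apply Finset.sum_eq_zero
        intro t ht
        exact hqnotpp w.1 hw.1 t (hz2 ht)
      have e4 : bf (∑ t ∈ z.2, rep t) (∑ t ∈ w.2, rep t) = 0 := hsum_even z.2 hz2 w.2 hw2
      rw [e1, e2, e3, e4]
      simp
    rw [← hcardE]
    exact eventown_bound E hEev
  -- the key constraint : 2*b + s ≤ M + 4
  have hkey : 2 * b + s ≤ M + 4 := by
    rcases Nat.eq_zero_or_pos s with hs0 | hs1
    · omega
    · have hsM : s ≤ n / 2 := by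
        have := hG
        rw [hMdef] at this
        exact (Nat.pow_le_pow_iff_right (by norm_num)).1 this
      set k := n / 2 - s with hkdef
      have hsk : s + k = n / 2 := by omega
      have hMsk : M = 2 ^ s * 2 ^ k := by
        rw [hMdef, ← pow_add, hsk]
      have hbs : b - s ≤ 2 ^ k := by
        by_contra hcon
        push_neg at hcon
        have : (2 ^ k + 1) * 2 ^ s ≤ (b - s) * 2 ^ s :=
          Nat.mul_le_mul_right _ hcon
        have h2 : (2 ^ k + 1) * 2 ^ s = M + 2 ^ s := by
          rw [hMsk]; ring
        have h3 : 0 < 2 ^ s := Nat.pow_pos (by norm_num)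
        omega
      have hpa := pow_arith s hs1 k
      have h2k1 : 2 ^ (k + 1) = 2 * 2 ^ k := by rw [pow_succ]; ring
      have h2sk : 2 ^ (s + k) = M := by rw [hMsk, pow_add]
      omega
  -- ### the counting ###
  set P2 : Vec n → Finset (Vec n) := fun x =>
    if x ∈ Y (r x) then (X (r x) \ Y (r x)).filter (fun z => yf z = x) else {yf x} with hP2def
  set F1 : Vec n → Finset (Finset (Vec n)) := fun x => (D1 \ SS).filter (fun t => rep t = x)
    with hF1def
  set F2 : Vec n → Finset (Finset (Vec n)) := fun x => (D1 \ SS).filter (fun t => rep (ptr t) = x)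
    with hF2def
  set P3 : Vec n → Finset (Vec n) := fun x =>
    (F1 x).image (fun t => rep (ptr t)) ∪ (F2 x).image rep with hP3def
  -- membership facts for P2
  have hP2mem : ∀ x ∈ Abar, ∀ z ∈ P2 x, z ∈ Abar ∧ z ≠ x ∧ bf x z = 1 ∧ r z = r x := by
    intro x hx z hz
    replace hz : z ∈ (if x ∈ Y (r x) then
        (X (r x) \ Y (r x)).filter (fun z => yf z = x) else {yf x}) := hz
    by_cases hxy : x ∈ Y (r x)
    · rw [if_pos hxy] at hz
      rw [Finset.mem_filter, Finset.mem_sdiff] at hz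
      obtain ⟨⟨hzX, hzY⟩, hzyf⟩ := hz
      have hzAbar : z ∈ Abar := hXsub _ hzX
      have hrz : r z = r x := hrX _ z hzX
      have hspec := hyf z hzAbar (by rw [hrz]; exact hzY)
      refine ⟨hzAbar, fun he => hzY (he ▸ hxy), ?_, hrz⟩
      rw [bf_symm, ← hzyf]
      exact hspec.2
    · rw [if_neg hxy] at hz
      rw [Finset.mem_singleton] at hz
      subst hz
      have hspec := hyf x hx hxy
      have hzX : yf x ∈ X (r x) := hYsub _ hspec.1
      refine ⟨hXsub _ hzX, ?_, hspec.2, hrX _ _ hzX⟩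
      intro he
      have h1 := hspec.1
      rw [he] at h1
      exact hxy h1
  -- membership facts for P3
  have hP3mem : ∀ x ∈ Abar, ∀ z ∈ P3 x, z ∈ Abar ∧ z ≠ x ∧ bf x z = 1 ∧ r z ≠ r x := by
    intro x hx z hz
    replace hz : z ∈ (F1 x).image (fun t => rep (ptr t)) ∪ (F2 x).image rep := hz
    have key : z ∈ Abar ∧ bf x z = 1 ∧ r z ≠ r x := by
      rcases Finset.mem_union.1 hz with hz1 | hz2
      · obtain ⟨t, ht, rfl⟩ := Finset.mem_image.1 hz1
        rw [hF1def, Finset.mem_filter] at ht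
        obtain ⟨htDS, hrept⟩ := ht
        have hspec := hptrspec t htDS
        have htT : t ∈ T := hD1T (Finset.mem_sdiff.1 htDS).1
        have hptrT : ptr t ∈ T := hD1T (hSSD1 hspec.1)
        have hzX : rep (ptr t) ∈ X (ptr t) := hrep _ hptrT
        have hrz : r (rep (ptr t)) = ptr t := hrX _ _ hzX
        have hrx : r x = t := by rw [← hrept]; exact hrX _ _ (hrep _ htT)
        refine ⟨hXsub _ hzX, ?_, ?_⟩
        · rw [← hrept]; exact hspec.2
        · rw [hrz, hrx]
          intro he
          exact (Finset.mem_sdiff.1 htDS).2 (he ▸ hspec.1)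
      · obtain ⟨t, ht, rfl⟩ := Finset.mem_image.1 hz2
        rw [hF2def, Finset.mem_filter] at ht
        obtain ⟨htDS, hrept⟩ := ht
        have hspec := hptrspec t htDS
        have htT : t ∈ T := hD1T (Finset.mem_sdiff.1 htDS).1
        have hzX : rep t ∈ X t := hrep _ htT
        have hrz : r (rep t) = t := hrX _ _ hzX
        have hrx : r x = ptr t := by
          rw [← hrept]
          exact hrX _ _ (hrep _ (hD1T (hSSD1 hspec.1)))
        refine ⟨hXsub _ hzX, ?_, ?_⟩
        · rw [← hrept, bf_symm]; exact hspec.2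
        · rw [hrz, hrx]
          intro he
          exact (Finset.mem_sdiff.1 htDS).2 (he.symm ▸ hspec.1)
    refine ⟨key.1, ?_, key.2.1, key.2.2⟩
    intro he
    exact key.2.2 (he ▸ rfl)
  -- pointwise bound
  have hpt : ∀ x ∈ Abar, (r x).card + ((P2 x).card + (P3 x).card) ≤ f x := by
    intro x hx
    have hd23 : Disjoint (P2 x) (P3 x) := by
      rw [Finset.disjoint_left]
      intro z hz2 hz3
      exact (hP3mem x hx z hz3).2.2.2 ((hP2mem x hx z hz2).2.2.2)
    have hd123 : Disjoint (r x) (P2 x ∪ P3 x) := by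
      rw [Finset.disjoint_left]
      intro z hz1 hz23
      have hzB : z ∈ B := (Finset.mem_filter.1 hz1).1
      rcases Finset.mem_union.1 hz23 with hz | hz
      · exact (Finset.mem_sdiff.1 ((hP2mem x hx z hz).1)).2 hzB
      · exact (Finset.mem_sdiff.1 ((hP3mem x hx z hz).1)).2 hzB
    have hsub : r x ∪ (P2 x ∪ P3 x) ⊆ A.filter (fun z => z ≠ x ∧ bf x z = 1) := by
      intro z hz
      rw [Finset.mem_filter]
      rcases Finset.mem_union.1 hz with hz1 | hz23
      · have hzB : z ∈ B := (Finset.mem_filter.1 hz1).1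
        refine ⟨hBA hzB, fun he => (Finset.mem_sdiff.1 hx).2 (he ▸ hzB), hrmem x z hz1⟩
      · rcases Finset.mem_union.1 hz23 with hz | hz
        · obtain ⟨hm, hne, hbf, _⟩ := hP2mem x hx z hz
          exact ⟨(Finset.mem_sdiff.1 hm).1, hne, hbf⟩
        · obtain ⟨hm, hne, hbf, _⟩ := hP3mem x hx z hz
          exact ⟨(Finset.mem_sdiff.1 hm).1, hne, hbf⟩
    calc (r x).card + ((P2 x).card + (P3 x).card)
        = (r x ∪ (P2 x ∪ P3 x)).card := by
          rw [Finset.card_union_of_disjoint hd123, Finset.card_union_of_disjoint hd23]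
      _ ≤ f x := Finset.card_le_card hsub
  -- classes are nonempty rows
  have ht1 : ∀ t ∈ T, 1 ≤ t.card := by
    intro t ht
    obtain ⟨x, hx, rfl⟩ := Finset.mem_image.1 ht
    obtain ⟨q, hqB, hq1⟩ := hodd x hx
    have : q ∈ r x := Finset.mem_filter.2 ⟨hqB, hq1⟩
    exact Finset.card_pos.2 ⟨q, this⟩
  -- B-side count
  have hBside : ∑ x ∈ Abar, (r x).card ≤ ∑ x ∈ B, f x := by
    have he := double_count (n := n) Abar B
    have he2 : ∑ x ∈ Abar, (r x).card
        = ∑ q ∈ B, (Abar.filter fun x => bf x q = 1).card := he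
    rw [he2]
    apply Finset.sum_le_sum
    intro q hq
    apply Finset.card_le_card
    intro z hz
    rw [Finset.mem_filter] at hz ⊢
    have hzA := Finset.mem_sdiff.1 hz.1
    exact ⟨hzA.1, fun heq => hzA.2 (heq ▸ hq), by rw [bf_symm]; exact hz.2⟩
  -- Abar-side count
  have hAbarSide : ∑ x ∈ Abar, ((r x).card + ((P2 x).card + (P3 x).card)) ≤ ∑ x ∈ Abar, f x :=
    Finset.sum_le_sum hpt
  -- sum of P3 cards
  have hP3sum : ∑ x ∈ Abar, (P3 x).card = 2 * (D1 \ SS).card := by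
    have hpt3 : ∀ x ∈ Abar, (P3 x).card = (F1 x).card + (F2 x).card := by
      intro x hx
      have hdisj : Disjoint ((F1 x).image (fun t => rep (ptr t))) ((F2 x).image rep) := by
        rw [Finset.disjoint_left]
        intro z hz1 hz2
        obtain ⟨t, ht, rfl⟩ := Finset.mem_image.1 hz1
        obtain ⟨u, hu, heq⟩ := Finset.mem_image.1 hz2
        rw [hF1def, Finset.mem_filter] at ht
        rw [hF2def, Finset.mem_filter] at hu
        have htSS : ptr t ∈ SS := (hptrspec t ht.1).1
        have huDS := Finset.mem_sdiff.1 hu.1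
        have : u = ptr t := hrepinj u (hD1T huDS.1) (ptr t) (hD1T (hSSD1 htSS)) heq
        exact huDS.2 (this ▸ htSS)
      have hc1 : ((F1 x).image (fun t => rep (ptr t))).card = (F1 x).card := by
        apply Finset.card_image_of_injOn
        intro t ht u hu _
        replace ht : t ∈ (D1 \ SS).filter (fun t => rep t = x) := ht
        replace hu : u ∈ (D1 \ SS).filter (fun t => rep t = x) := hu
        rw [Finset.mem_filter] at ht hu
        exact hrepinj t (hD1T (Finset.mem_sdiff.1 ht.1).1) u
          (hD1T (Finset.mem_sdiff.1 hu.1).1) (ht.2.trans hu.2.symm)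
      have hc2 : ((F2 x).image rep).card = (F2 x).card := by
        apply Finset.card_image_of_injOn
        intro t ht u hu heq
        replace ht : t ∈ (D1 \ SS).filter (fun t => rep (ptr t) = x) := ht
        replace hu : u ∈ (D1 \ SS).filter (fun t => rep (ptr t) = x) := hu
        rw [Finset.mem_filter] at ht hu
        exact hrepinj t (hD1T (Finset.mem_sdiff.1 ht.1).1) u
          (hD1T (Finset.mem_sdiff.1 hu.1).1) heq
      have : (P3 x).card = ((F1 x).image (fun t => rep (ptr t))).card + ((F2 x).image rep).card := by
        rw [hP3def]
        exact Finset.card_union_of_disjoint hdisj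
      rw [this, hc1, hc2]
    rw [Finset.sum_congr rfl hpt3, Finset.sum_add_distrib]
    have hf1 : ∑ x ∈ Abar, (F1 x).card = (D1 \ SS).card := by
      rw [hF1def]
      exact (Finset.card_eq_sum_card_fiberwise (f := rep) (s := D1 \ SS) (t := Abar)
        (fun t ht => hXsub t (hrep t (hD1T (Finset.mem_sdiff.1 ht).1)))).symm
    have hf2 : ∑ x ∈ Abar, (F2 x).card = (D1 \ SS).card := by
      rw [hF2def]
      exact (Finset.card_eq_sum_card_fiberwise (f := fun t => rep (ptr t)) (s := D1 \ SS)
        (t := Abar)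
        (fun t ht => hXsub _ (hrep _ (hD1T (hSSD1 (hptrspec t ht).1))))).symm
    rw [hf1, hf2]
    omega
  -- sum of P2 cards, per class
  have hP2class : ∀ t ∈ T, ∑ x ∈ X t, (P2 x).card = 2 * (X t \ Y t).card := by
    intro t ht
    rw [← Finset.sum_sdiff (hYsub t)]
    have e1 : ∀ x ∈ X t \ Y t, (P2 x).card = 1 := by
      intro x hx
      rw [Finset.mem_sdiff] at hx
      have hrx : r x = t := hrX t x hx.1
      have hxy : x ∉ Y (r x) := by rw [hrx]; exact hx.2
      have : P2 x = {yf x} := by rw [hP2def]; exact if_neg hxy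
      rw [this, Finset.card_singleton]
    have e2 : ∀ x ∈ Y t, (P2 x).card = ((X t \ Y t).filter (fun z => yf z = x)).card := by
      intro x hx
      have hxX : x ∈ X t := hYsub t hx
      have hrx : r x = t := hrX t x hxX
      have hxy : x ∈ Y (r x) := by rw [hrx]; exact hx
      have : P2 x = (X (r x) \ Y (r x)).filter (fun z => yf z = x) := by
        rw [hP2def]; exact if_pos hxy
      rw [this, hrx]
    rw [Finset.sum_congr rfl e1, Finset.sum_congr rfl e2, Finset.sum_const, smul_eq_mul, mul_one]
    have e3 : ∑ x ∈ Y t, ((X t \ Y t).filter (fun z => yf z = x)).card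
        = (X t \ Y t).card := by
      refine (Finset.card_eq_sum_card_fiberwise (f := yf) (s := X t \ Y t) (t := Y t) ?_).symm
      intro z hz
      rw [Finset.mem_coe, Finset.mem_sdiff] at hz
      have hzAbar : z ∈ Abar := hXsub t hz.1
      have hrz : r z = t := hrX t z hz.1
      have := (hyf z hzAbar (by rw [hrz]; exact hz.2)).1
      rw [hrz] at this
      exact this
    rw [e3]
    omega
  have hP2sum : ∑ x ∈ Abar, (P2 x).card = ∑ t ∈ T, 2 * (X t \ Y t).card := by
    have := Finset.sum_fiberwise_of_maps_to (g := r) (s := Abar) (t := T)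
      (fun x hx => hrT x hx) (fun x => (P2 x).card)
    rw [← this]
    exact Finset.sum_congr rfl fun t ht => hP2class t ht
  -- SP identity
  have hSPsum : ∑ x ∈ Abar, (r x).card = ∑ t ∈ T, (X t).card * t.card := by
    have := Finset.sum_fiberwise_of_maps_to (g := r) (s := Abar) (t := T)
      (fun x hx => hrT x hx) (fun x => (r x).card)
    rw [← this]
    refine Finset.sum_congr rfl fun t ht => ?_
    have : ∀ x ∈ X t, (r x).card = t.card := fun x hx => by rw [hrX t x hx]
    rw [Finset.sum_congr rfl this, Finset.sum_const, smul_eq_mul]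
  -- the per-class inequality
  have hclass : ∀ t ∈ T,
      2 * (X t).card ≤ (X t).card * t.card + (X t \ Y t).card + (if t.card = 1 then 1 else 0) := by
    intro t ht
    have hyd := hYd t ht
    have hyx : (Y t).card ≤ (X t).card := Finset.card_le_card (hYsub t)
    have hcs : (X t \ Y t).card = (X t).card - (Y t).card := Finset.card_sdiff_of_subset (hYsub t)
    by_cases hd1 : t.card = 1
    · rw [if_pos hd1, hd1, mul_one]
      omega
    · rw [if_neg hd1]
      have hd2 : 2 ≤ t.card := by
        have := ht1 t ht
        omega
      have : (X t).card * 2 ≤ (X t).card * t.card := Nat.mul_le_mul_left _ hd2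
      omega
  -- summed class inequality
  have hclasssum : 2 * Abar.card
      ≤ (∑ t ∈ T, (X t).card * t.card) + (∑ t ∈ T, (X t \ Y t).card) + D1.card := by
    have h1 : ∑ t ∈ T, 2 * (X t).card
        ≤ ∑ t ∈ T, ((X t).card * t.card + (X t \ Y t).card + (if t.card = 1 then 1 else 0)) :=
      Finset.sum_le_sum hclass
    have h2 : ∑ t ∈ T, 2 * (X t).card = 2 * Abar.card := by
      rw [← Finset.mul_sum]
      congr 1
      exact (Finset.card_eq_sum_card_fiberwise (f := r) (s := Abar) (t := T)
        (fun x hx => hrT x hx)).symm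
    have h3 : ∑ t ∈ T, (if t.card = 1 then 1 else 0) = D1.card := by
      rw [hD1def, Finset.card_filter]
    rw [h2] at h1
    rw [Finset.sum_add_distrib, Finset.sum_add_distrib, h3] at h1
    exact h1
  -- final assembly
  have hsplitA : (∑ x ∈ Abar, f x) + ∑ x ∈ B, f x = ∑ x ∈ A, f x := Finset.sum_sdiff hBA
  have hABcard : Abar.card + b = A.card := by
    rw [hAbardef, hbdef]
    exact Finset.card_sdiff_add_card_eq_card hBA
  have hDScard : (D1 \ SS).card + s = D1.card := by
    rw [hsdef]
    exact Finset.card_sdiff_add_card_eq_card hSSD1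
  have hsumP : ∑ x ∈ Abar, ((r x).card + ((P2 x).card + (P3 x).card))
      = (∑ t ∈ T, (X t).card * t.card) + ((∑ t ∈ T, 2 * (X t \ Y t).card)
        + 2 * (D1 \ SS).card) := by
    rw [Finset.sum_add_distrib, Finset.sum_add_distrib, hSPsum, hP2sum, hP3sum]
  have hQ2 : ∑ t ∈ T, 2 * (X t \ Y t).card = 2 * ∑ t ∈ T, (X t \ Y t).card := by
    rw [Finset.mul_sum]
  rw [hsumP, hQ2] at hAbarSide
  rw [← hsplitA]
  rw [hSPsum] at hBside
  omega



variable {n : ℕ}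

theorem main_vec (A : Finset (Vec n)) (hA0 : ∀ v ∈ A, bf v v = 0)
    (hN : 2 ^ (n / 2) + 2 ≤ A.card) :
    2 * 2 ^ (n / 2) ≤ (A.offDiag.filter fun p => bf p.1 p.2 = 1).card := by
  classical
  set M := 2 ^ (n / 2) with hMdef
  obtain ⟨B, hBA, hBev, hBmax⟩ :=
    exists_max_subset A (fun C => ∀ u ∈ C, ∀ v ∈ C, bf u v = 0) (by simp)
  set b := B.card with hbdef
  have hbM : b ≤ M := eventown_bound B hBev
  have hNA : M + 2 ≤ A.card := hN
  -- every x outside B has an odd partner inside B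
  have hodd : ∀ x ∈ A \ B, ∃ q ∈ B, bf x q = 1 := by
    intro x hx
    rw [Finset.mem_sdiff] at hx
    by_contra hcon
    push_neg at hcon
    have hall : ∀ q ∈ B, bf x q = 0 := fun q hq => bf_eq_zero_of_ne_one (hcon q hq)
    have hins : insert x B ⊆ A := Finset.insert_subset hx.1 hBA
    have hev : ∀ u ∈ insert x B, ∀ v ∈ insert x B, bf u v = 0 := by
      intro u hu v hv
      rcases Finset.mem_insert.1 hu with rfl | hu' <;>
        rcases Finset.mem_insert.1 hv with hveq | hv'
      · rw [hveq]; exact hA0 u hx.1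
      · exact hall v hv'
      · rw [hveq, bf_symm]; exact hall u hu'
      · exact hBev u hu' v hv'
    have hle := hBmax _ hins hev
    rw [Finset.card_insert_of_notMem hx.2] at hle
    omega
  -- halving bound via doubling
  have hdeg : ∀ x ∈ A \ B, 2 * (B.filter fun q => bf x q = 0).card ≤ M := by
    intro x hx
    obtain ⟨q₀, hq₀B, hq₀⟩ := hodd x hx
    rw [Finset.mem_sdiff] at hx
    set D := B.filter fun q => bf x q = 0 with hDdef
    have hDB : D ⊆ B := Finset.filter_subset _ _
    set D2 := D.image (fun d => x + d) with hD2def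
    have hdisj : Disjoint D D2 := by
      rw [Finset.disjoint_right]
      intro e he2 he1
      obtain ⟨d, hd, rfl⟩ := Finset.mem_image.1 he2
      have h1 : bf (x + d) q₀ = 1 := by
        rw [bf_add_left, hq₀, hBev d (hDB hd) q₀ hq₀B, add_zero]
      have h2 : bf (x + d) q₀ = 0 := hBev _ (hDB he1) q₀ hq₀B
      rw [h1] at h2
      exact one_ne_zero h2
    have hcard2 : D2.card = D.card :=
      Finset.card_image_of_injective _ (add_right_injective x)
    have hev2 : ∀ u ∈ D ∪ D2, ∀ v ∈ D ∪ D2, bf u v = 0 := by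
      intro u hu v hv
      rcases Finset.mem_union.1 hu with hu' | hu' <;>
        rcases Finset.mem_union.1 hv with hv' | hv'
      · exact hBev u (hDB hu') v (hDB hv')
      · obtain ⟨d, hd, rfl⟩ := Finset.mem_image.1 hv'
        rw [bf_add_right]
        have e1 : bf u x = 0 := by
          rw [bf_symm]; exact (Finset.mem_filter.1 hu').2
        rw [e1, hBev u (hDB hu') d (hDB hd), add_zero]
      · obtain ⟨d, hd, rfl⟩ := Finset.mem_image.1 hu'
        rw [bf_add_left]
        have e1 : bf x v = (0 : ZMod 2) := (Finset.mem_filter.1 hv').2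
        have e2 : bf d v = 0 := hBev d (hDB hd) v (hDB hv')
        rw [e1, e2, add_zero]
      · obtain ⟨d, hd, rfl⟩ := Finset.mem_image.1 hu'
        obtain ⟨d', hd', rfl⟩ := Finset.mem_image.1 hv'
        rw [bf_add_left, bf_add_right, bf_add_right]
        have e1 : bf x d' = (0 : ZMod 2) := (Finset.mem_filter.1 hd').2
        have e2 : bf d x = 0 := by
          rw [bf_symm]; exact (Finset.mem_filter.1 hd).2
        rw [hA0 x hx.1, e1, e2, hBev d (hDB hd) d' (hDB hd')]
        simp
    have hevb := eventown_bound (D ∪ D2) hev2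
    rw [Finset.card_union_of_disjoint hdisj, hcard2] at hevb
    omega
  -- the per-vertex degree into B
  have hdeg1 : ∀ x ∈ A \ B, 2 * b ≤ 2 * (B.filter fun q => bf x q = 1).card + M := by
    intro x hx
    have hpart := Finset.card_filter_add_card_filter_not
      (s := B) (p := fun q => bf x q = 1)
    have heq : (B.filter fun q => ¬ bf x q = 1) = (B.filter fun q => bf x q = 0) := by
      apply Finset.filter_congr
      intro q hq
      constructor
      · intro h; exact bf_eq_zero_of_ne_one h
      · intro h0 h1; rw [h0] at h1; exact one_ne_zero h1.symm
    rw [heq] at hpart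
    have := hdeg x hx
    omega
  rw [count_pairs]
  -- split the sum
  have hsplit :
      (∑ x ∈ A \ B, (A.filter fun z => z ≠ x ∧ bf x z = 1).card)
        + ∑ x ∈ B, (A.filter fun z => z ≠ x ∧ bf x z = 1).card
      = ∑ x ∈ A, (A.filter fun z => z ≠ x ∧ bf x z = 1).card :=
    Finset.sum_sdiff hBA
  -- outside-part bound
  have houter : ∀ x ∈ A \ B,
      (B.filter fun q => bf x q = 1).card ≤ (A.filter fun z => z ≠ x ∧ bf x z = 1).card := by
    intro x hx
    apply Finset.card_le_card
    intro q hq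
    rw [Finset.mem_filter] at hq ⊢
    rw [Finset.mem_sdiff] at hx
    refine ⟨hBA hq.1, fun he => hx.2 (he ▸ hq.1), hq.2⟩
  -- B-side bound, via double counting
  have hinner : ∑ x ∈ A \ B, (B.filter fun q => bf x q = 1).card
      ≤ ∑ x ∈ B, (A.filter fun z => z ≠ x ∧ bf x z = 1).card := by
    have e1 : ∑ x ∈ A \ B, (B.filter fun q => bf x q = 1).card
        = ∑ q ∈ B, ((A \ B).filter fun x => bf x q = 1).card :=
      double_count (A \ B) B
    rw [e1]
    apply Finset.sum_le_sum
    intro q hq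
    apply Finset.card_le_card
    intro z hz
    rw [Finset.mem_filter] at hz ⊢
    rw [Finset.mem_sdiff] at hz
    refine ⟨hz.1.1, fun he => hz.1.2 (he ▸ hq), by rw [bf_symm]; exact hz.2⟩
  set S := ∑ x ∈ A \ B, (B.filter fun q => bf x q = 1).card with hSdef
  have hΩ : 2 * S ≤ ∑ x ∈ A, (A.filter fun z => z ≠ x ∧ bf x z = 1).card := by
    rw [← hsplit]
    have := Finset.sum_le_sum houter
    omega
  rcases Nat.lt_or_ge (2 * b) (M + 4) with hcase | hcase
  · -- small b : the hard case
    exact case_b A B hA0 hBA hBev hBmax hodd hN hcase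
  · -- CASE A : M + 4 ≤ 2 * b
    set cbar := (A \ B).card with hcbar
    have hcb : cbar + b = A.card := by
      rw [hcbar, hbdef]
      rw [Finset.card_sdiff_of_subset hBA]
      have := Finset.card_le_card hBA
      omega
    have hsum2 : cbar * (2 * b) ≤ 2 * S + cbar * M := by
      calc cbar * (2 * b) = ∑ _x ∈ A \ B, 2 * b := by
            rw [Finset.sum_const, smul_eq_mul, mul_comm]
        _ ≤ ∑ x ∈ A \ B, (2 * (B.filter fun q => bf x q = 1).card + M) :=
            Finset.sum_le_sum hdeg1
        _ = 2 * S + cbar * M := by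
            rw [Finset.sum_add_distrib, Finset.sum_const, smul_eq_mul, hSdef, Finset.mul_sum]
    have hq := quad_arith hcase hbM
    have hmono : (M + 2 - b) * (2 * b - M) ≤ cbar * (2 * b - M) := by
      apply Nat.mul_le_mul_right
      omega
    have he : cbar * (2 * b) = cbar * (2 * b - M) + cbar * M := by
      rw [← Nat.mul_add]
      congr 1
      omega
    omega


-- transfer lemmas
def ev (S : Finset (Fin n)) : Vec n := fun i => if i ∈ S then 1 else 0

lemma ev_inj : Function.Injective (ev (n := n)) := by
  intro S T h
  ext i
  have hco := congrFun h i
  simp only [ev] at hco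
  by_cases hS : i ∈ S <;> by_cases hT : i ∈ T
  · simp [hS, hT]
  · rw [if_pos hS, if_neg hT] at hco
    exact absurd hco one_ne_zero
  · rw [if_neg hS, if_pos hT] at hco
    exact absurd hco.symm one_ne_zero
  · simp [hS, hT]

lemma bf_ev (S T : Finset (Fin n)) : bf (ev S) (ev T) = ((S ∩ T).card : ZMod 2) := by
  classical
  have e1 : bf (ev S) (ev T) = ∑ i, if i ∈ S ∩ T then (1 : ZMod 2) else 0 := by
    apply Finset.sum_congr rfl
    intro i _
    by_cases hS : i ∈ S <;> by_cases hT : i ∈ T <;>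
      simp [ev, hS, hT, Finset.mem_inter]
  rw [e1, Finset.sum_boole]
  congr 1
  rw [Finset.filter_univ_mem]

lemma cast_eq_one_iff_odd (k : ℕ) : (k : ZMod 2) = 1 ↔ Odd k := by
  constructor
  · intro h
    rcases Nat.even_or_odd k with he | ho
    · obtain ⟨m, rfl⟩ := he
      exfalso
      have e : ((m + m : ℕ) : ZMod 2) = 2 * (m : ZMod 2) := by push_cast; ring
      rw [e] at h
      have h2 : (2 : ZMod 2) = 0 := by decide
      rw [h2, zero_mul] at h
      exact one_ne_zero h.symm
    · exact ho
  · intro h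
    obtain ⟨m, rfl⟩ := h
    have e : ((2 * m + 1 : ℕ) : ZMod 2) = 2 * (m : ZMod 2) + 1 := by push_cast; ring
    rw [e]
    have h2 : (2 : ZMod 2) = 0 := by decide
    rw [h2, zero_mul, zero_add]

lemma cast_eq_zero_of_even {k : ℕ} (h : Even k) : (k : ZMod 2) = 0 := by
  obtain ⟨m, rfl⟩ := h
  have e : ((m + m : ℕ) : ZMod 2) = 2 * (m : ZMod 2) := by push_cast; ring
  rw [e]
  have h2 : (2 : ZMod 2) = 0 := by decide
  rw [h2, zero_mul]

end EvtSup

open EvtSup in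
/-- Eventown supersaturation, s = 2: a family of at least `2^⌊n/2⌋ + 2`
even-sized subsets of an `n`-element set has at least `2^⌊n/2⌋` unordered pairs
with odd-sized intersection.  (Counting ordered pairs via `offDiag`, the bound
is doubled.) -/
theorem eventown_supersat_two (n : ℕ) (𝒜 : Finset (Finset (Fin n)))
    (heven : ∀ A ∈ 𝒜, Even A.card)
    (hcard : 2 ^ (n / 2) + 2 ≤ 𝒜.card) :
    2 * 2 ^ (n / 2) ≤
      (𝒜.offDiag.filter fun p => Odd ((p.1 ∩ p.2).card)).card := by
  classical
  set A := 𝒜.image ev with hAdef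
  have hcardA : A.card = 𝒜.card := Finset.card_image_of_injective _ ev_inj
  have hA0 : ∀ v ∈ A, bf v v = 0 := by
    intro v hv
    obtain ⟨S, hS, rfl⟩ := Finset.mem_image.1 hv
    rw [bf_ev, Finset.inter_self]
    exact cast_eq_zero_of_even (heven S hS)
  have key := main_vec A hA0 (by rw [hcardA]; exact hcard)
  suffices heq : (𝒜.offDiag.filter fun p => Odd ((p.1 ∩ p.2).card)).card
      = (A.offDiag.filter fun p => bf p.1 p.2 = 1).card by
    rw [heq]; exact key
  apply Finset.card_bij (fun p _ => (ev p.1, ev p.2))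
  · intro p hp
    rw [Finset.mem_filter, Finset.mem_offDiag] at hp ⊢
    obtain ⟨⟨h1, h2, h3⟩, h4⟩ := hp
    refine ⟨⟨Finset.mem_image_of_mem ev h1, Finset.mem_image_of_mem ev h2, ?_⟩, ?_⟩
    · intro he
      exact h3 (ev_inj he)
    · rw [bf_ev, cast_eq_one_iff_odd]
      exact h4
  · intro p hp q hq he
    rw [Prod.mk.injEq] at he
    exact Prod.ext (ev_inj he.1) (ev_inj he.2)
  · intro q hq
    rw [Finset.mem_filter, Finset.mem_offDiag] at hq
    obtain ⟨⟨h1, h2, h3⟩, h4⟩ := hq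
    obtain ⟨S, hS, hSq⟩ := Finset.mem_image.1 h1
    obtain ⟨T, hT, hTq⟩ := Finset.mem_image.1 h2
    refine ⟨(S, T), ?_, Prod.ext hSq hTq⟩
    rw [Finset.mem_filter, Finset.mem_offDiag]
    refine ⟨⟨hS, hT, ?_⟩, ?_⟩
    · intro he
      apply h3
      rw [← hSq, ← hTq]
      exact congrArg ev he
    · rw [← hSq, ← hTq, bf_ev, cast_eq_one_iff_odd] at h4
      exact h4
end

section
/- Let A be a collection of odd-sized subsets of an n-element set with |A| ≥ n + 1. Then the number of distinct pairs {A,B} of sets from A with |A ∩ B| odd is at least 3. -/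
open Finset

namespace OddtownSup

/-- characteristic vector over `ZMod 2` -/
def chi {n : ℕ} (A : Finset (Fin n)) : Fin n → ZMod 2 := fun i => if i ∈ A then 1 else 0

lemma chi_inj {n : ℕ} {A B : Finset (Fin n)} (h : chi A = chi B) : A = B := by
  ext i
  constructor
  · intro hi
    by_contra hB
    have := congrFun h i
    simp only [chi, if_pos hi, if_neg hB] at this
    exact one_ne_zero this
  · intro hi
    by_contra hA
    have := congrFun h i
    simp only [chi, if_pos hi, if_neg hA] at this
    exact one_ne_zero this.symm

def ip {n : ℕ} (u v : Fin n → ZMod 2) : ZMod 2 := ∑ i, u i * v i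

lemma ip_chi_chi {n : ℕ} (A B : Finset (Fin n)) :
    ip (chi A) (chi B) = ((A ∩ B).card : ZMod 2) := by
  unfold ip chi
  have h : ∀ i, (if i ∈ A then (1 : ZMod 2) else 0) * (if i ∈ B then 1 else 0)
      = if i ∈ A ∩ B then 1 else 0 := by
    intro i
    by_cases hA : i ∈ A <;> by_cases hB : i ∈ B <;> simp [hA, hB]
  simp_rw [h]
  rw [Finset.sum_ite_mem, Finset.univ_inter, Finset.sum_const, Finset.card_eq_sum_ones,
    Nat.cast_sum]
  simp

lemma ip_sum_left {n : ℕ} {α : Type*} (s : Finset α) (g : α → (Fin n → ZMod 2))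
    (v : Fin n → ZMod 2) : ip (∑ x ∈ s, g x) v = ∑ x ∈ s, ip (g x) v := by
  simp only [ip, Finset.sum_apply, Finset.sum_mul]
  exact Finset.sum_comm

lemma ip_smul_left {n : ℕ} (c : ZMod 2) (u v : Fin n → ZMod 2) :
    ip (c • u) v = c * ip u v := by
  simp only [ip, Pi.smul_apply, smul_eq_mul, mul_assoc, ← Finset.mul_sum]

lemma ip_add_right {n : ℕ} (u v w : Fin n → ZMod 2) :
    ip u (v + w) = ip u v + ip u w := by
  simp only [ip, Pi.add_apply, mul_add, Finset.sum_add_distrib]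

lemma ip_single {n : ℕ} (i : Fin n) (v : Fin n → ZMod 2) :
    ip (Pi.single i 1) v = v i := by
  unfold ip
  rw [Finset.sum_eq_single i]
  · simp
  · intro j _ hj
    simp [Pi.single_apply, hj]
  · intro h
    simp at h

lemma cast_eq_one_iff_odd (k : ℕ) : ((k : ZMod 2) = 1) ↔ Odd k := by
  rw [Nat.odd_iff, ← ZMod.natCast_mod k 2]
  rcases Nat.mod_two_eq_zero_or_one k with h | h <;> rw [h] <;> decide

lemma cast_eq_zero_iff_even (k : ℕ) : ((k : ZMod 2) = 0) ↔ Even k := by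
  rw [Nat.even_iff, ← ZMod.natCast_mod k 2]
  rcases Nat.mod_two_eq_zero_or_one k with h | h <;> rw [h] <;> decide

lemma even_card_of_symm {α : Type*} [DecidableEq α] :
    ∀ (Q : Finset (α × α)), (∀ p ∈ Q, (p.2, p.1) ∈ Q) → (∀ p ∈ Q, p.1 ≠ p.2) →
    Even Q.card := by
  intro Q
  induction Q using Finset.strongInduction with
  | _ Q ih =>
    intro hs hi
    rcases Q.eq_empty_or_nonempty with rfl | ⟨p, hp⟩
    · simp
    · have hp' : (p.2, p.1) ∈ Q := hs p hp
      have hne : (p.2, p.1) ≠ p := by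
        intro h
        exact hi p hp (congrArg Prod.fst h).symm
      set Q' := (Q.erase p).erase (p.2, p.1) with hQ'def
      have hsub : Q' ⊆ Q := (Finset.erase_subset _ _).trans (Finset.erase_subset _ _)
      have hpnot : p ∉ Q' := by simp [hQ'def]
      have hss : Q' ⊂ Q := hsub.ssubset_of_ne (fun h => hpnot (h ▸ hp))
      have h2 : Q'.card + 1 = (Q.erase p).card :=
        Finset.card_erase_add_one (Finset.mem_erase.mpr ⟨hne, hp'⟩)
      have h1 : (Q.erase p).card + 1 = Q.card := Finset.card_erase_add_one hp
      have hsymm' : ∀ q ∈ Q', (q.2, q.1) ∈ Q' := by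
        intro q hq
        simp only [hQ'def, Finset.mem_erase] at hq ⊢
        obtain ⟨hq1, hq2, hq3⟩ := hq
        refine ⟨?_, ?_, hs q hq3⟩
        · intro h; apply hq2; rw [Prod.ext_iff] at h ⊢; exact ⟨h.2, h.1⟩
        · intro h; apply hq1; rw [Prod.ext_iff] at h ⊢; exact ⟨h.2, h.1⟩
      have hirr' : ∀ q ∈ Q', q.1 ≠ q.2 := fun q hq => hi q (hsub hq)
      obtain ⟨m, hm⟩ := ih Q' hss hsymm' hirr'
      exact ⟨m + 1, by omega⟩

end OddtownSup

lemma z01 : ∀ x : ZMod 2, x = 0 ∨ x = 1 := by decide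

lemma zcancel : ∀ x y : ZMod 2, x + y = 0 → x = y := by decide

lemma zone_add : ∀ x : ZMod 2, 1 + x = 0 → x = 1 := by decide

lemma zoneone : (1 : ZMod 2) + 1 = 0 := by decide

lemma zzero : (0 : ZMod 2) + 0 = 0 := by decide

lemma zne : ¬ (0 : ZMod 2) = 1 := by decide

open OddtownSup in
/-- Oddtown supersaturation: a family of at least `n + 1` odd-sized subsets of
an `n`-element set has at least `3` unordered pairs with odd-sized
intersection.  (Counting ordered pairs via `offDiag`, the bound is doubled.) -/
theorem oddtown_supersat (n : ℕ) (𝒜 : Finset (Finset (Fin n)))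
    (hodd : ∀ A ∈ 𝒜, Odd A.card)
    (hcard : n + 1 ≤ 𝒜.card) :
    2 * 3 ≤ (𝒜.offDiag.filter fun p => Odd ((p.1 ∩ p.2).card)).card := by
  classical
  by_contra hlt
  push_neg at hlt
  haveI : Fact (Nat.Prime 2) := ⟨Nat.prime_two⟩
  set P : Finset (↥𝒜 × ↥𝒜) :=
    Finset.univ.filter
      (fun p : ↥𝒜 × ↥𝒜 => p.1.1 ≠ p.2.1 ∧ Odd ((p.1.1 ∩ p.2.1).card)) with hPdef
  have hmemP : ∀ p : ↥𝒜 × ↥𝒜,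
      p ∈ P ↔ p.1.1 ≠ p.2.1 ∧ Odd ((p.1.1 ∩ p.2.1).card) := by
    intro p
    simp [hPdef]
  have hPcard_eq :
      (𝒜.offDiag.filter fun p => Odd ((p.1 ∩ p.2).card)).card = P.card := by
    apply Finset.card_bij
      (fun q hq => ((⟨q.1, by
          have h := (Finset.mem_filter.mp hq).1
          exact (Finset.mem_offDiag.mp h).1⟩ : ↥𝒜),
        (⟨q.2, by
          have h := (Finset.mem_filter.mp hq).1
          exact (Finset.mem_offDiag.mp h).2.1⟩ : ↥𝒜)))
    · intro q hq
      obtain ⟨hq1, hq2⟩ := Finset.mem_filter.mp hq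
      obtain ⟨_, _, hne⟩ := Finset.mem_offDiag.mp hq1
      exact (hmemP _).mpr ⟨hne, hq2⟩
    · intro q hq q' hq' h
      rw [Prod.ext_iff] at h
      exact Prod.ext_iff.mpr ⟨congrArg Subtype.val h.1, congrArg Subtype.val h.2⟩
    · intro p hp
      obtain ⟨hne, hoddp⟩ := (hmemP p).mp hp
      refine ⟨(p.1.1, p.2.1),
        Finset.mem_filter.mpr ⟨Finset.mem_offDiag.mpr ⟨p.1.2, p.2.2, hne⟩, hoddp⟩, ?_⟩
      exact Prod.ext_iff.mpr ⟨Subtype.ext rfl, Subtype.ext rfl⟩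
  have hPsymm : ∀ p ∈ P, (p.2, p.1) ∈ P := by
    intro p hp
    obtain ⟨hne, ho⟩ := (hmemP p).mp hp
    exact (hmemP _).mpr ⟨hne.symm, by rwa [Finset.inter_comm] at ho⟩
  have hPirr : ∀ p ∈ P, p.1 ≠ p.2 := fun p hp h =>
    ((hmemP p).mp hp).1 (congrArg Subtype.val h)
  have hPeven : Even P.card := even_card_of_symm P hPsymm hPirr
  have hP4 : P.card ≤ 4 := by
    obtain ⟨m, hm⟩ := hPeven
    rw [hPcard_eq] at hlt
    omega
  -- the linear map sending coefficient vectors to combinations of characteristic vectors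
  set φ : (↥𝒜 → ZMod 2) →ₗ[ZMod 2] (Fin n → ZMod 2) :=
    ∑ A : ↥𝒜, (LinearMap.proj A).smulRight (chi A.1) with hφdef
  have hφ : ∀ f : ↥𝒜 → ZMod 2, φ f = ∑ A : ↥𝒜, f A • chi A.1 := by
    intro f
    simp [hφdef, LinearMap.sum_apply, LinearMap.smulRight_apply, LinearMap.proj_apply]
  set T : Finset ↥𝒜 :=
    Finset.univ.filter (fun B : ↥𝒜 => ∃ A : ↥𝒜, (A, B) ∈ P) with hTdef
  have key : ∀ f : ↥𝒜 → ZMod 2, φ f = 0 → f ≠ 0 →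
      (Finset.univ.filter (fun A : ↥𝒜 => f A = 1) = T ∧
       ∃ A₀ B₀ : ↥𝒜, (A₀, B₀) ∈ P ∧ (∀ X, (A₀, X) ∈ P → X = B₀) ∧
         (∀ X, (B₀, X) ∈ P → X = A₀)) := by
    intro f hfker hfne
    set S := Finset.univ.filter (fun A : ↥𝒜 => f A = 1) with hSdef
    have hfS : ∀ A : ↥𝒜, f A = 1 ↔ A ∈ S := by
      intro A
      simp [hSdef]
    have hf01 : ∀ A : ↥𝒜, A ∉ S → f A = 0 := by
      intro A hA
      rcases z01 (f A) with h | h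
      · exact h
      · exact absurd ((hfS A).mp h) hA
    have hsum : ∑ A ∈ S, chi A.1 = 0 := by
      have h1 : ∑ A ∈ S, f A • chi A.1 = ∑ A : ↥𝒜, f A • chi A.1 :=
        Finset.sum_subset (Finset.subset_univ S)
          (fun A _ hA => by rw [hf01 A hA, zero_smul])
      have h2 : ∑ A ∈ S, chi A.1 = ∑ A ∈ S, f A • chi A.1 :=
        Finset.sum_congr rfl (fun A hA => by rw [(hfS A).mpr hA, one_smul])
      rw [h2, h1, ← hφ f, hfker]
    have hNodd : ∀ B ∈ S,
        Odd (((S.erase B).filter (fun A : ↥𝒜 => Odd ((A.1 ∩ B.1).card))).card) := by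
      intro B hB
      have h0 : ∑ A ∈ S, ip (chi A.1) (chi B.1) = 0 := by
        rw [← ip_sum_left, hsum]
        simp [ip]
      simp_rw [ip_chi_chi] at h0
      rw [← Finset.add_sum_erase S _ hB, Finset.inter_self,
        (cast_eq_one_iff_odd _).mpr (hodd B.1 B.2)] at h0
      have hx : ∑ A ∈ S.erase B, (((A.1 ∩ B.1).card : ZMod 2)) = 1 := zone_add _ h0
      rw [← Finset.sum_filter_add_sum_filter_not (S.erase B)
        (fun A : ↥𝒜 => Odd ((A.1 ∩ B.1).card))] at hx
      have hzero : ∑ A ∈ (S.erase B).filter (fun A : ↥𝒜 => ¬ Odd ((A.1 ∩ B.1).card)),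
          (((A.1 ∩ B.1).card : ZMod 2)) = 0 :=
        Finset.sum_eq_zero (fun A hA =>
          (cast_eq_zero_iff_even _).mpr
            (Nat.not_odd_iff_even.mp (Finset.mem_filter.mp hA).2))
      rw [hzero, add_zero] at hx
      have hone : ∑ A ∈ (S.erase B).filter (fun A : ↥𝒜 => Odd ((A.1 ∩ B.1).card)),
          (((A.1 ∩ B.1).card : ZMod 2))
          = ((((S.erase B).filter (fun A : ↥𝒜 => Odd ((A.1 ∩ B.1).card))).card : ℕ)
            : ZMod 2) := by
        rw [Finset.card_eq_sum_ones, Nat.cast_sum]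
        exact Finset.sum_congr rfl (fun A hA => by
          rw [(cast_eq_one_iff_odd _).mpr (Finset.mem_filter.mp hA).2, Nat.cast_one])
      rw [hone] at hx
      exact (cast_eq_one_iff_odd _).mp hx
    set Q := P.filter (fun p : ↥𝒜 × ↥𝒜 => p.1 ∈ S ∧ p.2 ∈ S) with hQdef
    have hQmem : ∀ p : ↥𝒜 × ↥𝒜, p ∈ Q ↔ (p ∈ P ∧ p.1 ∈ S ∧ p.2 ∈ S) := by
      intro p
      simp [hQdef, Finset.mem_filter, and_assoc]
    have hQcard : Q.card = ∑ B ∈ S,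
        (((S.erase B).filter (fun A : ↥𝒜 => Odd ((A.1 ∩ B.1).card))).card) := by
      rw [Finset.card_eq_sum_card_fiberwise (f := fun p : ↥𝒜 × ↥𝒜 => p.2) (t := S)
        (fun p hp => ((hQmem p).mp hp).2.2)]
      apply Finset.sum_congr rfl
      intro B hB
      apply Finset.card_bij (fun p _ => p.1)
      · intro p hp
        obtain ⟨hpQ, hp2⟩ := Finset.mem_filter.mp hp
        obtain ⟨hpP, hp1S, _⟩ := (hQmem p).mp hpQ
        obtain ⟨hne, ho⟩ := (hmemP p).mp hpP
        refine Finset.mem_filter.mpr ⟨Finset.mem_erase.mpr ⟨?_, hp1S⟩, ?_⟩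
        · intro h
          apply hne
          rw [h, hp2]
        · rw [← hp2]
          exact ho
      · intro p hp q hq h
        have hp2 := (Finset.mem_filter.mp hp).2
        have hq2 := (Finset.mem_filter.mp hq).2
        exact Prod.ext_iff.mpr ⟨h, hp2.trans hq2.symm⟩
      · intro A hA
        obtain ⟨hAe, hoA⟩ := Finset.mem_filter.mp hA
        obtain ⟨hAB, hAS⟩ := Finset.mem_erase.mp hAe
        exact ⟨(A, B), Finset.mem_filter.mpr
          ⟨(hQmem _).mpr ⟨(hmemP _).mpr ⟨fun h => hAB (Subtype.ext h), hoA⟩, hAS, hB⟩,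
            rfl⟩, rfl⟩
    have hNpos : ∀ B ∈ S,
        1 ≤ (((S.erase B).filter (fun A : ↥𝒜 => Odd ((A.1 ∩ B.1).card))).card) := by
      intro B hB
      have h := hNodd B hB
      rcases Nat.eq_zero_or_pos
        (((S.erase B).filter (fun A : ↥𝒜 => Odd ((A.1 ∩ B.1).card))).card) with h0 | h0
      · rw [h0] at h
        exact absurd (Nat.odd_iff.mp h) (by decide)
      · exact h0
    have hScard_le : S.card ≤ Q.card := by
      rw [hQcard, Finset.card_eq_sum_ones S]
      exact Finset.sum_le_sum hNpos
    have hQsub : Q ⊆ P := Finset.filter_subset _ _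
    have hQcard_le : Q.card ≤ P.card := Finset.card_le_card hQsub
    have hQsymm : ∀ p ∈ Q, (p.2, p.1) ∈ Q := by
      intro p hp
      obtain ⟨hpP, h1, h2⟩ := (hQmem p).mp hp
      exact (hQmem _).mpr ⟨hPsymm p hpP, h2, h1⟩
    have hQirr : ∀ p ∈ Q, p.1 ≠ p.2 := fun p hp => hPirr p (hQsub hp)
    have hQeven : Even Q.card := even_card_of_symm Q hQsymm hQirr
    have hSeven : Even S.card := by
      have hc1 : ((Q.card : ℕ) : ZMod 2) = ((S.card : ℕ) : ZMod 2) := by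
        rw [hQcard, Nat.cast_sum, Finset.card_eq_sum_ones S, Nat.cast_sum]
        exact Finset.sum_congr rfl (fun B hB => by
          rw [(cast_eq_one_iff_odd _).mpr (hNodd B hB), Nat.cast_one])
      have hc2 : ((S.card : ℕ) : ZMod 2) = 0 := by
        rw [← hc1]
        exact (cast_eq_zero_iff_even _).mpr hQeven
      exact (cast_eq_zero_iff_even _).mp hc2
    have hSne : S.Nonempty := by
      rcases S.eq_empty_or_nonempty with h | h
      · exfalso
        apply hfne
        funext A
        exact hf01 A (by rw [h]; exact Finset.notMem_empty A)
      · exact h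
    have hS4 : S.card = 4 := by
      have hS24 : S.card = 2 ∨ S.card = 4 := by
        obtain ⟨m, hm⟩ := hSeven
        have h1 : 0 < S.card := Finset.card_pos.mpr hSne
        omega
      rcases hS24 with h2 | h4
      · exfalso
        obtain ⟨A, B, hAB, hSeq⟩ := Finset.card_eq_two.mp h2
        rw [hSeq, Finset.sum_pair hAB] at hsum
        have heq : chi A.1 = chi B.1 := by
          funext i
          exact zcancel _ _ (congrFun hsum i)
        exact hAB (Subtype.ext (chi_inj heq))
      · exact h4
    have hN1 : ∀ B ∈ S,
        (((S.erase B).filter (fun A : ↥𝒜 => Odd ((A.1 ∩ B.1).card))).card) = 1 := by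
      by_contra hcon
      push_neg at hcon
      obtain ⟨B₁, hB₁, hNb⟩ := hcon
      have hlt2 : ∑ _B ∈ S, 1 < ∑ B ∈ S,
          (((S.erase B).filter (fun A : ↥𝒜 => Odd ((A.1 ∩ B.1).card))).card) :=
        Finset.sum_lt_sum hNpos ⟨B₁, hB₁, by have := hNpos B₁ hB₁; omega⟩
      have h4' : S.card < Q.card := by
        rw [hQcard, Finset.card_eq_sum_ones S]
        exact hlt2
      omega
    have hQcard4 : Q.card = 4 := by
      have hQS : Q.card = S.card := by
        rw [hQcard]
        calc ∑ B ∈ S, (((S.erase B).filter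
              (fun A : ↥𝒜 => Odd ((A.1 ∩ B.1).card))).card)
            = ∑ _B ∈ S, 1 := Finset.sum_congr rfl hN1
          _ = S.card := (Finset.card_eq_sum_ones S).symm
      omega
    have hQP : Q = P := Finset.eq_of_subset_of_card_le hQsub (by omega)
    constructor
    · ext B
      simp only [hTdef, Finset.mem_filter, Finset.mem_univ, true_and]
      constructor
      · intro hB
        obtain ⟨A, hAeq⟩ := Finset.card_eq_one.mp (hN1 B hB)
        have hAmem : A ∈ (S.erase B).filter (fun A : ↥𝒜 => Odd ((A.1 ∩ B.1).card)) := by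
          rw [hAeq]
          exact Finset.mem_singleton_self A
        obtain ⟨hAe, hoA⟩ := Finset.mem_filter.mp hAmem
        obtain ⟨hABne, _⟩ := Finset.mem_erase.mp hAe
        exact ⟨A, (hmemP _).mpr ⟨fun h => hABne (Subtype.ext h), hoA⟩⟩
      · rintro ⟨A, hA⟩
        have hQA : (A, B) ∈ Q := by
          rw [hQP]
          exact hA
        exact ((hQmem _).mp hQA).2.2
    · obtain ⟨A₀, hA₀S⟩ := hSne
      obtain ⟨B₀, hB₀eq⟩ := Finset.card_eq_one.mp (hN1 A₀ hA₀S)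
      have hB₀mem : B₀ ∈ (S.erase A₀).filter (fun A : ↥𝒜 => Odd ((A.1 ∩ A₀.1).card)) := by
        rw [hB₀eq]
        exact Finset.mem_singleton_self B₀
      obtain ⟨hB₀e, hoB₀⟩ := Finset.mem_filter.mp hB₀mem
      obtain ⟨hB₀ne, hB₀S⟩ := Finset.mem_erase.mp hB₀e
      refine ⟨A₀, B₀, ?_, ?_, ?_⟩
      · exact (hmemP _).mpr ⟨fun h => hB₀ne (Subtype.ext h.symm),
          by rwa [Finset.inter_comm] at hoB₀⟩
      · intro X hX
        have hXQ : (A₀, X) ∈ Q := by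
          rw [hQP]
          exact hX
        obtain ⟨hXP, _, hXS⟩ := (hQmem _).mp hXQ
        obtain ⟨hne, ho⟩ := (hmemP _).mp hXP
        have hXmem : X ∈ (S.erase A₀).filter (fun A : ↥𝒜 => Odd ((A.1 ∩ A₀.1).card)) := by
          refine Finset.mem_filter.mpr ⟨Finset.mem_erase.mpr ⟨?_, hXS⟩, ?_⟩
          · intro h
            exact hne (congrArg Subtype.val h).symm
          · rwa [Finset.inter_comm] at ho
        rw [hB₀eq] at hXmem
        exact Finset.mem_singleton.mp hXmem
      · intro X hX
        have hXQ : (B₀, X) ∈ Q := by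
          rw [hQP]
          exact hX
        obtain ⟨hXP, _, hXS⟩ := (hQmem _).mp hXQ
        obtain ⟨hne, ho⟩ := (hmemP _).mp hXP
        obtain ⟨C, hCeq⟩ := Finset.card_eq_one.mp (hN1 B₀ hB₀S)
        have hXmem : X ∈ (S.erase B₀).filter (fun A : ↥𝒜 => Odd ((A.1 ∩ B₀.1).card)) := by
          refine Finset.mem_filter.mpr ⟨Finset.mem_erase.mpr ⟨?_, hXS⟩, ?_⟩
          · intro h
            exact hne (congrArg Subtype.val h).symm
          · rwa [Finset.inter_comm] at ho
        have hA₀mem : A₀ ∈ (S.erase B₀).filter (fun A : ↥𝒜 => Odd ((A.1 ∩ B₀.1).card)) := by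
          refine Finset.mem_filter.mpr ⟨Finset.mem_erase.mpr ⟨Ne.symm hB₀ne, hA₀S⟩, ?_⟩
          · rwa [Finset.inter_comm] at hoB₀
        rw [hCeq] at hXmem hA₀mem
        exact (Finset.mem_singleton.mp hXmem).trans (Finset.mem_singleton.mp hA₀mem).symm
  -- rank computations
  have hdom : Module.finrank (ZMod 2) (↥𝒜 → ZMod 2) = 𝒜.card := by
    rw [Module.finrank_pi, Fintype.card_coe]
  have hcodom : Module.finrank (ZMod 2) (Fin n → ZMod 2) = n := by
    rw [Module.finrank_pi, Fintype.card_fin]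
  have hrn := LinearMap.finrank_range_add_finrank_ker φ
  rw [hdom] at hrn
  have hrange_le : Module.finrank (ZMod 2) (LinearMap.range φ) ≤ n := by
    calc Module.finrank (ZMod 2) (LinearMap.range φ)
        ≤ Module.finrank (ZMod 2) (Fin n → ZMod 2) := Submodule.finrank_le _
      _ = n := hcodom
  obtain ⟨f₀, hf₀ker, hf₀ne⟩ : ∃ f, φ f = 0 ∧ f ≠ 0 := by
    by_contra h
    push_neg at h
    have hbot : LinearMap.ker φ = ⊥ := LinearMap.ker_eq_bot'.mpr (fun m hm => h m hm)
    have h0 : Module.finrank (ZMod 2) (LinearMap.ker φ) = 0 := by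
      rw [hbot]
      exact finrank_bot _ _
    omega
  obtain ⟨hSTf₀, A₀, B₀, hABP, huniqA, huniqB⟩ := key f₀ hf₀ker hf₀ne
  have huniq : ∀ g, φ g = 0 → g ≠ 0 → g = f₀ := by
    intro g hg hgne
    obtain ⟨hSTg, _⟩ := key g hg hgne
    have hfilt := hSTg.trans hSTf₀.symm
    funext A
    have hmem : (g A = 1) ↔ (f₀ A = 1) := by
      constructor
      · intro h
        have hA : A ∈ Finset.univ.filter (fun A : ↥𝒜 => g A = 1) :=
          Finset.mem_filter.mpr ⟨Finset.mem_univ _, h⟩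
        rw [hfilt] at hA
        exact (Finset.mem_filter.mp hA).2
      · intro h
        have hA : A ∈ Finset.univ.filter (fun A : ↥𝒜 => f₀ A = 1) :=
          Finset.mem_filter.mpr ⟨Finset.mem_univ _, h⟩
        rw [← hfilt] at hA
        exact (Finset.mem_filter.mp hA).2
    rcases z01 (g A) with h | h <;> rcases z01 (f₀ A) with h' | h'
    · rw [h, h']
    · exact absurd (hmem.mpr h') (by rw [h]; exact zne)
    · exact absurd (hmem.mp h) (by rw [h']; exact zne)
    · rw [h, h']
  have hker_le : Module.finrank (ZMod 2) (LinearMap.ker φ) ≤ 1 := by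
    have hle : LinearMap.ker φ ≤ Submodule.span (ZMod 2) {f₀} := by
      intro g hg
      rcases eq_or_ne g 0 with rfl | hgne
      · exact Submodule.zero_mem _
      · rw [huniq g (LinearMap.mem_ker.mp hg) hgne]
        exact Submodule.mem_span_singleton_self f₀
    calc Module.finrank (ZMod 2) (LinearMap.ker φ)
        ≤ Module.finrank (ZMod 2) (Submodule.span (ZMod 2) {f₀}) :=
          Submodule.finrank_mono hle
      _ = 1 := finrank_span_singleton hf₀ne
  have hrange_eq : LinearMap.range φ = ⊤ := by
    apply Submodule.eq_top_of_finrank_eq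
    rw [hcodom]
    omega
  have hA0B0ne : A₀.1 ≠ B₀.1 := ((hmemP _).mp hABP).1
  have hoddAB : Odd ((A₀.1 ∩ B₀.1).card) := ((hmemP _).mp hABP).2
  have hw : ∀ X : ↥𝒜,
      ((X.1 ∩ A₀.1).card : ZMod 2) + ((X.1 ∩ B₀.1).card : ZMod 2) = 0 := by
    intro X
    rcases eq_or_ne X A₀ with rfl | hXA
    · rw [Finset.inter_self, (cast_eq_one_iff_odd _).mpr (hodd _ X.2),
        (cast_eq_one_iff_odd _).mpr hoddAB]
      exact zoneone
    rcases eq_or_ne X B₀ with rfl | hXB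
    · rw [Finset.inter_self, (cast_eq_one_iff_odd _).mpr (hodd _ X.2),
        (cast_eq_one_iff_odd _).mpr (by rwa [Finset.inter_comm] at hoddAB)]
      exact zoneone
    · have h1 : ¬ Odd ((X.1 ∩ A₀.1).card) := by
        intro ho
        have hmm : (A₀, X) ∈ P := (hmemP _).mpr
          ⟨fun h => hXA (Subtype.ext h.symm), by rwa [Finset.inter_comm] at ho⟩
        exact hXB (huniqA X hmm)
      have h2 : ¬ Odd ((X.1 ∩ B₀.1).card) := by
        intro ho
        have hmm : (B₀, X) ∈ P := (hmemP _).mpr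
          ⟨fun h => hXB (Subtype.ext h.symm), by rwa [Finset.inter_comm] at ho⟩
        exact hXA (huniqB X hmm)
      rw [(cast_eq_zero_iff_even _).mpr (Nat.not_odd_iff_even.mp h1),
        (cast_eq_zero_iff_even _).mpr (Nat.not_odd_iff_even.mp h2)]
      exact zzero
  have hchi : chi A₀.1 = chi B₀.1 := by
    funext i
    obtain ⟨g, hg⟩ := LinearMap.range_eq_top.mp hrange_eq (Pi.single i 1)
    have hcalc : ip (φ g) (chi A₀.1 + chi B₀.1) = 0 := by
      rw [hφ g, ip_sum_left]
      apply Finset.sum_eq_zero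
      intro X _
      rw [ip_smul_left, ip_add_right, ip_chi_chi, ip_chi_chi, hw X, mul_zero]
    rw [hg, ip_single] at hcalc
    simp only [Pi.add_apply] at hcalc
    exact zcancel _ _ hcalc
  exact hA0B0ne (chi_inj hchi)
end

section
/- There is no collection A of n+1 odd-sized subsets of [n] such that exactly one unordered pair of distinct sets from A has odd-sized intersection. -/
private def ind {n : ℕ} (A : Finset (Fin n)) : Fin n → ZMod 2 :=
  fun i => if i ∈ A then 1 else 0

private lemma ind_inj {n : ℕ} {A B : Finset (Fin n)} (h : ind A = ind B) : A = B := by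
  ext i
  have := congrFun h i
  simp only [ind] at this
  by_cases hA : i ∈ A <;> by_cases hB : i ∈ B <;> simp_all

private lemma inner_eq {n : ℕ} (A B : Finset (Fin n)) :
    ∑ i, ind A i * ind B i = ((A ∩ B).card : ZMod 2) := by
  have : ∀ i : Fin n, ind A i * ind B i = if i ∈ A ∩ B then 1 else 0 := by
    intro i
    simp only [ind, Finset.mem_inter]
    by_cases hA : i ∈ A <;> by_cases hB : i ∈ B <;> simp [hA, hB]
  rw [Finset.sum_congr rfl fun i _ => this i]
  rw [Finset.sum_ite_mem, Finset.univ_inter, Finset.sum_const, nsmul_eq_mul, mul_one]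

private lemma cast_eq_one_iff_odd (c : ℕ) : (c : ZMod 2) = 1 ↔ Odd c := by
  rw [Nat.odd_iff, ← ZMod.natCast_mod c 2]
  rcases Nat.mod_two_eq_zero_or_one c with h | h <;> rw [h] <;> decide

private lemma cast_ne_zero_iff_odd (c : ℕ) : ((c : ZMod 2) ≠ 0) ↔ Odd c := by
  rw [← cast_eq_one_iff_odd]
  constructor
  · intro h; revert h; generalize (c : ZMod 2) = x; revert x; decide
  · intro h; rw [h]; decide

/-- There is no family of `n + 1` odd-sized subsets of `[n]` with exactly one
unordered pair having odd-sized intersection (`offDiag` counts each unordered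
pair twice, so the ordered count would be `2`). -/
theorem no_exactly_one_odd_pair (n : ℕ) :
    ¬ ∃ 𝒜 : Finset (Finset (Fin n)),
      𝒜.card = n + 1 ∧ (∀ A ∈ 𝒜, Odd A.card) ∧
      (𝒜.offDiag.filter fun p => Odd ((p.1 ∩ p.2).card)).card = 2 := by
  rintro ⟨𝒜, hcard, hodd, hF⟩
  set F := 𝒜.offDiag.filter fun p => Odd ((p.1 ∩ p.2).card) with hFdef
  -- the family of indicator vectors is linearly dependent
  have hdep : ¬ LinearIndependent (ZMod 2) (fun A : 𝒜 => ind A.1) := by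
    intro h
    have h1 := h.fintype_card_le_finrank
    rw [Module.finrank_pi, Fintype.card_fin, Fintype.card_coe, hcard] at h1
    omega
  rw [Fintype.not_linearIndependent_iff] at hdep
  obtain ⟨g, hsum, a₀, ha₀⟩ := hdep
  have hone : ∀ x : ZMod 2, x ≠ 0 → x = 1 := by decide
  -- key claim: every element in the support of g has an "odd partner" in the support
  have claim : ∀ a : 𝒜, g a ≠ 0 → ∃ b : 𝒜, b ≠ a ∧ g b ≠ 0 ∧ ((b.1, a.1) ∈ F) := by
    intro a ha
    have h0 : ∀ i : Fin n, (∑ b : 𝒜, g b * ind b.1 i) = 0 := by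
      intro i
      have := congrFun hsum i
      simpa [Finset.sum_apply] using this
    have hmain : (∑ b : 𝒜, g b * (((b.1 ∩ a.1).card : ZMod 2))) = 0 := by
      have : (∑ b : 𝒜, g b * (((b.1 ∩ a.1).card : ZMod 2)))
          = ∑ i : Fin n, (∑ b : 𝒜, g b * ind b.1 i) * ind a.1 i := by
        rw [Finset.sum_congr rfl (fun b _ => by rw [← inner_eq b.1 a.1, Finset.mul_sum])]
        rw [Finset.sum_comm]
        exact Finset.sum_congr rfl fun i _ => by rw [Finset.sum_mul]; exact Finset.sum_congr rfl fun _ _ => by ring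
      rw [this]
      exact Finset.sum_eq_zero fun i _ => by rw [h0 i, zero_mul]
    -- split off the term at a
    rw [← Finset.add_sum_erase _ _ (Finset.mem_univ a)] at hmain
    have haa : g a * (((a.1 ∩ a.1).card : ZMod 2)) = 1 := by
      rw [hone _ ha, one_mul, Finset.inter_self, (cast_eq_one_iff_odd _).2 (hodd a.1 a.2)]
    rw [haa] at hmain
    have hrest : (∑ b ∈ Finset.univ.erase a, g b * (((b.1 ∩ a.1).card : ZMod 2))) ≠ 0 := by
      intro h
      rw [h, add_zero] at hmain
      exact one_ne_zero hmain
    obtain ⟨b, hb, hbne⟩ := Finset.exists_ne_zero_of_sum_ne_zero hrest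
    refine ⟨b, (Finset.mem_erase.1 hb).1, fun h => hbne (by rw [h, zero_mul]), ?_⟩
    have hba : b.1 ≠ a.1 := fun h => (Finset.mem_erase.1 hb).1 (Subtype.ext h)
    have hoddint : Odd ((b.1 ∩ a.1).card) := by
      rw [← cast_ne_zero_iff_odd]
      intro h
      exact hbne (by rw [h, mul_zero])
    exact Finset.mem_filter.2 ⟨Finset.mem_offDiag.2 ⟨b.2, a.2, hba⟩, hoddint⟩
  -- get the unique pair
  obtain ⟨b₀, hb₀ne, hb₀g, hb₀F⟩ := claim a₀ ha₀
  have haF : ((a₀.1, b₀.1) ∈ F) := by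
    obtain ⟨hoff, hO⟩ := Finset.mem_filter.1 hb₀F
    obtain ⟨h1, h2, h3⟩ := Finset.mem_offDiag.1 hoff
    exact Finset.mem_filter.2 ⟨Finset.mem_offDiag.2 ⟨h2, h1, fun h => h3 h.symm⟩,
      by rwa [Finset.inter_comm]⟩
  have hab : a₀.1 ≠ b₀.1 := fun h => hb₀ne (Subtype.ext h.symm)
  have hFeq : F = {(b₀.1, a₀.1), (a₀.1, b₀.1)} := by
    refine (Finset.eq_of_subset_of_card_le ?_ ?_).symm
    · intro p hp
      rcases Finset.mem_insert.1 hp with h | h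
      · rw [h]; exact hb₀F
      · rw [Finset.mem_singleton.1 h]; exact haF
    · rw [hF, Finset.card_insert_of_notMem, Finset.card_singleton]
      simp only [Finset.mem_singleton, Prod.mk.injEq, not_and]
      intro h; exact absurd h.symm hab
  -- support of g is contained in {a₀, b₀}
  have hsupp : ∀ c : 𝒜, g c ≠ 0 → c = a₀ ∨ c = b₀ := by
    intro c hc
    obtain ⟨d, hdne, hdg, hdF⟩ := claim c hc
    rw [hFeq] at hdF
    rcases Finset.mem_insert.1 hdF with h | h
    · left; exact Subtype.ext (congrArg Prod.snd h)
    · right; exact Subtype.ext (congrArg Prod.snd (Finset.mem_singleton.1 h))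
  -- hence the dependency is ind a₀ + ind b₀ = 0
  have hfilter : Finset.univ.filter (fun c : 𝒜 => g c ≠ 0) = {a₀, b₀} := by
    ext c
    simp only [Finset.mem_filter, Finset.mem_univ, true_and, Finset.mem_insert,
      Finset.mem_singleton]
    constructor
    · exact hsupp c
    · rintro (rfl | rfl) <;> assumption
  have hsum2 : ind a₀.1 + ind b₀.1 = 0 := by
    have h1 : (∑ c : 𝒜, g c • ind c.1)
        = ∑ c ∈ Finset.univ.filter (fun c : 𝒜 => g c ≠ 0), g c • ind c.1 := by
      refine (Finset.sum_filter_of_ne fun c _ h hc => ?_).symm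
      exact absurd (by rw [hc, zero_smul]) h
    rw [h1, hfilter, Finset.sum_pair hb₀ne.symm, hone _ ha₀, hone _ hb₀g,
      one_smul, one_smul] at hsum
    exact hsum
  have : ind a₀.1 = ind b₀.1 := by
    have h2 : ∀ x y : ZMod 2, x + y = 0 → x = y := by decide
    funext i
    exact h2 _ _ (congrFun hsum2 i)
  exact hab (ind_inj this)
end

section
/- Let A be a collection of m even-sized subsets of [n] containing an eventown subfamily A' of size t > 2^(⌊n/2⌋−1) that is maximal in A (no set of A \ A' can be added keeping eventown). Then the number of pairs of sets in A with odd-sized intersection is at least (t − 2^(⌊n/2⌋−1))·(m − t). -/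
open Finset

namespace EventownSup

variable {n : ℕ}

/-- characteristic vector over `ZMod 2` -/
def toVec (n : ℕ) (A : Finset (Fin n)) : Fin n → ZMod 2 := fun i => if i ∈ A then 1 else 0

/-- the dot-product bilinear form on `Fin n → ZMod 2` -/
def dotForm (n : ℕ) : LinearMap.BilinForm (ZMod 2) (Fin n → ZMod 2) :=
  LinearMap.mk₂ (ZMod 2) (fun x y => ∑ i, x i * y i)
    (fun x x' y => by simp [add_mul, Finset.sum_add_distrib])
    (fun c x y => by simp [Finset.mul_sum, mul_assoc])
    (fun x y y' => by simp [mul_add, Finset.sum_add_distrib])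
    (fun c x y => by simp [Finset.mul_sum]; ring_nf; simp [mul_assoc, mul_comm, mul_left_comm])

lemma dotForm_apply (x y : Fin n → ZMod 2) : dotForm n x y = ∑ i, x i * y i := rfl

lemma dotForm_toVec (A B : Finset (Fin n)) :
    dotForm n (toVec n A) (toVec n B) = ((A ∩ B).card : ZMod 2) := by
  rw [dotForm_apply]
  have : ∀ i : Fin n, toVec n A i * toVec n B i = if i ∈ A ∩ B then 1 else 0 := by
    intro i
    simp only [toVec, Finset.mem_inter]
    by_cases h1 : i ∈ A <;> by_cases h2 : i ∈ B <;> simp [h1, h2]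
  rw [Finset.sum_congr rfl fun i _ => this i]
  rw [Finset.sum_ite_mem, Finset.univ_inter, Finset.sum_const, nsmul_eq_mul, mul_one]

lemma dotForm_symm (x y : Fin n → ZMod 2) : dotForm n x y = dotForm n y x := by
  simp [dotForm_apply, mul_comm]

lemma dotForm_refl : (dotForm n).IsRefl := fun x y h => by rw [dotForm_symm]; exact h

lemma dotForm_nondeg : (dotForm n).Nondegenerate := by
  refine ⟨fun x hx => ?_, fun x hx => ?_⟩ <;>
  funext i <;>
  have := hx (Pi.single i 1) <;>
  rw [dotForm_apply] at this <;>
  simpa [Pi.single_apply] using this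

lemma toVec_injective : Function.Injective (toVec n) := by
  intro A B h
  ext i
  have := congrFun h i
  simp only [toVec] at this
  by_cases h1 : i ∈ A <;> by_cases h2 : i ∈ B <;> simp_all

lemma even_iff_cast (k : ℕ) : Even k ↔ (k : ZMod 2) = 0 := by
  rw [ZMod.natCast_eq_zero_iff]
  exact even_iff_two_dvd

lemma odd_cast_eq_one {k : ℕ} (h : Odd k) : (k : ZMod 2) ≠ 0 := by
  intro h0
  exact (Nat.not_even_iff_odd.mpr h) ((even_iff_cast k).mpr h0)

end EventownSup

namespace EventownSup

set_option maxHeartbeats 1600000 in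
set_option synthInstance.maxHeartbeats 400000 in
lemma key_bound {n : ℕ} (𝒜' : Finset (Finset (Fin n)))
    (hevent : ∀ A ∈ 𝒜', ∀ B ∈ 𝒜', Even ((A ∩ B).card))
    (B : Finset (Fin n)) (hodd : ∃ A ∈ 𝒜', Odd ((A ∩ B).card)) :
    (𝒜'.filter (fun A => ¬ Odd ((A ∩ B).card))).card ≤ 2 ^ (n / 2 - 1) := by
  classical
  set Bf := dotForm n with hBf
  set V : Submodule (ZMod 2) (Fin n → ZMod 2) := Submodule.span (ZMod 2) (toVec n '' ↑𝒜') with hV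
  -- self-orthogonality
  have hselfgen : ∀ g ∈ toVec n '' ↑𝒜', ∀ w ∈ V, Bf g w = 0 := by
    intro g hg
    obtain ⟨Ag, hAg, rfl⟩ := hg
    intro w hw
    have hker : V ≤ LinearMap.ker (Bf (toVec n Ag)) := by
      rw [hV, Submodule.span_le]
      rintro _ ⟨As, hAs, rfl⟩
      simp only [SetLike.mem_coe, LinearMap.mem_ker]
      rw [hBf, dotForm_toVec]
      exact (even_iff_cast _).mp (hevent _ hAg _ hAs)
    exact hker hw
  have hself : ∀ v ∈ V, ∀ w ∈ V, Bf v w = 0 := by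
    intro v hv w hw
    have hle : V ≤ Bf.orthogonal V := by
      rw [hV, Submodule.span_le]
      intro g hg
      rw [SetLike.mem_coe, LinearMap.BilinForm.mem_orthogonal_iff]
      intro u hu
      have := hselfgen g hg u hu
      exact dotForm_refl _ _ this
    exact hle hw v hv
  -- dimension bound
  have hfinW : Module.finrank (ZMod 2) (Fin n → ZMod 2) = n := by
    simp [Module.finrank_pi]
  have hdim : Module.finrank (ZMod 2) V ≤ n / 2 := by
    have h1 := LinearMap.BilinForm.finrank_add_finrank_orthogonal (B := Bf) dotForm_refl V
    rw [LinearMap.BilinForm.orthogonal_top_eq_bot dotForm_nondeg, inf_bot_eq, finrank_bot, add_zero,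
      hfinW] at h1
    have h2 : V ≤ Bf.orthogonal V := by
      intro v hv
      rw [LinearMap.BilinForm.mem_orthogonal_iff]
      intro u hu
      exact hself u hu v hv
    have h3 : Module.finrank (ZMod 2) V ≤ Module.finrank (ZMod 2) (Bf.orthogonal V) :=
      Submodule.finrank_mono h2
    omega
  -- the functional
  set ℓ : V →ₗ[ZMod 2] ZMod 2 := (Bf (toVec n B)).domRestrict V with hℓ
  obtain ⟨A₀, hA₀, hA₀odd⟩ := hodd
  have hA₀V : toVec n A₀ ∈ V := Submodule.subset_span ⟨A₀, hA₀, rfl⟩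
  have hℓA₀ : ℓ ⟨toVec n A₀, hA₀V⟩ ≠ 0 := by
    rw [hℓ, LinearMap.domRestrict_apply]
    show Bf (toVec n B) (toVec n A₀) ≠ 0
    rw [hBf, dotForm_toVec, Finset.inter_comm]
    exact odd_cast_eq_one hA₀odd
  have hrange : Module.finrank (ZMod 2) (LinearMap.range ℓ) = 1 := by
    have hle : Module.finrank (ZMod 2) (LinearMap.range ℓ) ≤ 1 := by
      simpa using Submodule.finrank_le (LinearMap.range ℓ)
    have hne : Module.finrank (ZMod 2) (LinearMap.range ℓ) ≠ 0 := by
      intro h0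
      have : LinearMap.range ℓ = ⊥ := Submodule.finrank_eq_zero.mp h0
      exact hℓA₀ (LinearMap.range_eq_bot.mp this ▸ rfl)
    omega
  have hrn := LinearMap.finrank_range_add_finrank_ker ℓ
  -- count
  haveI : Finite (Fin n → ZMod 2) := Pi.finite
  haveI : Finite V := Subtype.finite
  haveI : Finite (LinearMap.ker ℓ) := Subtype.finite
  haveI : Fintype (LinearMap.ker ℓ) := Fintype.ofFinite _
  have hcard : Fintype.card (LinearMap.ker ℓ) =
      2 ^ (Module.finrank (ZMod 2) (LinearMap.ker ℓ)) := by
    have := Module.card_eq_pow_finrank (K := ZMod 2) (V := LinearMap.ker ℓ)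
    simpa [ZMod.card] using this
  have hEle : (𝒜'.filter (fun A => ¬ Odd ((A ∩ B).card))).card
      ≤ Fintype.card (LinearMap.ker ℓ) := by
    set E := 𝒜'.filter (fun A => ¬ Odd ((A ∩ B).card)) with hE
    have himg : E.image (toVec n) ⊆
        Finset.univ.image (fun x : LinearMap.ker ℓ => ((x.1 : V) : Fin n → ZMod 2)) := by
      intro v hv
      rw [Finset.mem_image] at hv
      obtain ⟨A, hA, rfl⟩ := hv
      rw [hE, Finset.mem_filter] at hA
      have hAV : toVec n A ∈ V := Submodule.subset_span ⟨A, hA.1, rfl⟩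
      have hAker : (⟨toVec n A, hAV⟩ : V) ∈ LinearMap.ker ℓ := by
        rw [LinearMap.mem_ker, hℓ, LinearMap.domRestrict_apply]
        show Bf (toVec n B) (toVec n A) = 0
        rw [hBf, dotForm_toVec, Finset.inter_comm]
        exact (even_iff_cast _).mp (Nat.not_odd_iff_even.mp hA.2)
      exact Finset.mem_image.mpr ⟨⟨⟨toVec n A, hAV⟩, hAker⟩, Finset.mem_univ _, rfl⟩
    calc E.card = (E.image (toVec n)).card :=
          (Finset.card_image_of_injective _ toVec_injective).symm
      _ ≤ (Finset.univ.image (fun x : LinearMap.ker ℓ => ((x.1 : V) : Fin n → ZMod 2))).card :=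
          Finset.card_le_card himg
      _ ≤ Finset.univ.card := Finset.card_image_le
      _ = Fintype.card (LinearMap.ker ℓ) := Finset.card_univ
  calc (𝒜'.filter (fun A => ¬ Odd ((A ∩ B).card))).card
      ≤ Fintype.card (LinearMap.ker ℓ) := hEle
    _ = 2 ^ (Module.finrank (ZMod 2) (LinearMap.ker ℓ)) := hcard
    _ ≤ 2 ^ (n / 2 - 1) := Nat.pow_le_pow_right (by norm_num) (by omega)

end EventownSup

/-- Inequality (2): if `𝒜` is a family of even-sized subsets of `[n]`
containing a maximal (w.r.t. `𝒜`) eventown subfamily `𝒜'` of size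
`t > 2^(⌊n/2⌋ - 1)`, then `op(𝒜) ≥ (t - 2^(⌊n/2⌋-1))·(|𝒜| - t)`.
(`offDiag` counts ordered pairs, hence the factor `2`.) -/
theorem op_lower_bound_maximal_eventown (n : ℕ)
    (𝒜 𝒜' : Finset (Finset (Fin n)))
    (heven : ∀ A ∈ 𝒜, Even A.card)
    (hsub : 𝒜' ⊆ 𝒜)
    (hevent : ∀ A ∈ 𝒜', ∀ B ∈ 𝒜', Even ((A ∩ B).card))
    (hmax : ∀ B ∈ 𝒜 \ 𝒜', ∃ A ∈ 𝒜', Odd ((A ∩ B).card))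
    (ht : 2 ^ (n / 2 - 1) < 𝒜'.card) :
    2 * ((𝒜'.card - 2 ^ (n / 2 - 1)) * (𝒜.card - 𝒜'.card)) ≤
      (𝒜.offDiag.filter fun p => Odd ((p.1 ∩ p.2).card)).card := by
  have hkey : ∀ B ∈ 𝒜 \ 𝒜',
      𝒜'.card - 2 ^ (n / 2 - 1) ≤ (𝒜'.filter (fun A => Odd ((A ∩ B).card))).card := by
    intro B hB
    have h1 := EventownSup.key_bound 𝒜' hevent B (hmax B hB)
    have h2 : (𝒜'.filter (fun A => Odd ((A ∩ B).card))).card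
        + (𝒜'.filter (fun A => ¬ Odd ((A ∩ B).card))).card = 𝒜'.card :=
      Finset.card_filter_add_card_filter_not _
    omega
  have hT1sub : ((𝒜' ×ˢ (𝒜 \ 𝒜')).filter fun p => Odd ((p.1 ∩ p.2).card))
      ⊆ 𝒜.offDiag.filter fun p => Odd ((p.1 ∩ p.2).card) := by
    intro p hp
    rw [Finset.mem_filter, Finset.mem_product] at hp
    obtain ⟨⟨hp1, hp2⟩, hp3⟩ := hp
    rw [Finset.mem_sdiff] at hp2
    rw [Finset.mem_filter, Finset.mem_offDiag]
    exact ⟨⟨hsub hp1, hp2.1, fun h => hp2.2 (h ▸ hp1)⟩, hp3⟩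
  have hT2sub : (((𝒜 \ 𝒜') ×ˢ 𝒜').filter fun p => Odd ((p.1 ∩ p.2).card))
      ⊆ 𝒜.offDiag.filter fun p => Odd ((p.1 ∩ p.2).card) := by
    intro p hp
    rw [Finset.mem_filter, Finset.mem_product] at hp
    obtain ⟨⟨hp1, hp2⟩, hp3⟩ := hp
    rw [Finset.mem_sdiff] at hp1
    rw [Finset.mem_filter, Finset.mem_offDiag]
    exact ⟨⟨hp1.1, hsub hp2, fun h => hp1.2 (h ▸ hp2)⟩, hp3⟩
  have hdisj : Disjoint ((𝒜' ×ˢ (𝒜 \ 𝒜')).filter fun p => Odd ((p.1 ∩ p.2).card))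
      (((𝒜 \ 𝒜') ×ˢ 𝒜').filter fun p => Odd ((p.1 ∩ p.2).card)) := by
    rw [Finset.disjoint_left]
    intro p hp1 hp2
    rw [Finset.mem_filter, Finset.mem_product] at hp1 hp2
    exact (Finset.mem_sdiff.mp hp2.1.1).2 hp1.1.1
  have hT1card : (𝒜'.card - 2 ^ (n / 2 - 1)) * (𝒜.card - 𝒜'.card)
      ≤ ((𝒜' ×ˢ (𝒜 \ 𝒜')).filter fun p => Odd ((p.1 ∩ p.2).card)).card := by
    have heq : ((𝒜' ×ˢ (𝒜 \ 𝒜')).filter fun p => Odd ((p.1 ∩ p.2).card)).card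
        = ∑ B ∈ 𝒜 \ 𝒜', (𝒜'.filter (fun A => Odd ((A ∩ B).card))).card := by
      rw [Finset.card_filter, Finset.sum_product_right]
      refine Finset.sum_congr rfl fun B _ => ?_
      rw [Finset.card_filter]
    rw [heq]
    calc (𝒜'.card - 2 ^ (n / 2 - 1)) * (𝒜.card - 𝒜'.card)
        = ∑ _B ∈ 𝒜 \ 𝒜', (𝒜'.card - 2 ^ (n / 2 - 1)) := by
          rw [Finset.sum_const, Finset.card_sdiff_of_subset hsub, smul_eq_mul, mul_comm]
      _ ≤ _ := Finset.sum_le_sum hkey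
  have hT2card : (𝒜'.card - 2 ^ (n / 2 - 1)) * (𝒜.card - 𝒜'.card)
      ≤ (((𝒜 \ 𝒜') ×ˢ 𝒜').filter fun p => Odd ((p.1 ∩ p.2).card)).card := by
    have heq : (((𝒜 \ 𝒜') ×ˢ 𝒜').filter fun p => Odd ((p.1 ∩ p.2).card)).card
        = ∑ B ∈ 𝒜 \ 𝒜', (𝒜'.filter (fun A => Odd ((B ∩ A).card))).card := by
      rw [Finset.card_filter, Finset.sum_product]
      refine Finset.sum_congr rfl fun B _ => ?_
      rw [Finset.card_filter]
    rw [heq]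
    calc (𝒜'.card - 2 ^ (n / 2 - 1)) * (𝒜.card - 𝒜'.card)
        = ∑ _B ∈ 𝒜 \ 𝒜', (𝒜'.card - 2 ^ (n / 2 - 1)) := by
          rw [Finset.sum_const, Finset.card_sdiff_of_subset hsub, smul_eq_mul, mul_comm]
      _ ≤ _ := Finset.sum_le_sum (fun B hB => by
          have := hkey B hB
          have hcomm : (𝒜'.filter (fun A => Odd ((B ∩ A).card)))
              = (𝒜'.filter (fun A => Odd ((A ∩ B).card))) := by
            refine Finset.filter_congr fun A _ => ?_
            rw [Finset.inter_comm]
          rw [hcomm]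
          exact this)
  have hunion := Finset.card_union_of_disjoint hdisj
  have hle := Finset.card_le_card (Finset.union_subset hT1sub hT2sub)
  omega
end

section
/- For n = 4l with k = 2l, there exists a family A of 2^k + s even-sized subsets of [n] (for any 1 ≤ s ≤ 2^k − 2^l) such that the number of pairs from A with odd-sized intersection equals exactly s·2^(k−1). -/
open Finset

namespace ESTight

def Aset (l : ℕ) (J : Finset ℕ) : Finset ℕ :=
  (range (4 * l)).filter (fun x => x / 2 ∈ J)

def g (x : ℕ) : ℕ := 2 * (x / 4) + (if x % 4 = 0 ∨ x % 4 = 3 then 0 else 1)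

def Bset (l : ℕ) (K : Finset ℕ) : Finset ℕ :=
  (range (4 * l)).filter (fun x => g x ∈ K)

lemma mem_Aset {l : ℕ} {J : Finset ℕ} {x : ℕ} :
    x ∈ Aset l J ↔ x < 4 * l ∧ x / 2 ∈ J := by
  simp [Aset]

lemma mem_Bset {l : ℕ} {K : Finset ℕ} {x : ℕ} :
    x ∈ Bset l K ↔ x < 4 * l ∧ g x ∈ K := by
  simp [Bset]

lemma g_two_mul (m : ℕ) : g (2 * m) = m := by
  simp only [g]; split_ifs <;> omega

lemma g_four (i : ℕ) : g (4 * i) = 2 * i := by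
  simp only [g]; split_ifs <;> omega

lemma g_four_one (i : ℕ) : g (4 * i + 1) = 2 * i + 1 := by
  simp only [g]; split_ifs <;> omega

def fB (m : ℕ) : Finset ℕ := if m % 2 = 0 then {2*m, 2*m+3} else {2*m-1, 2*m}

lemma mem_fB {l m x : ℕ} (hm : m < 2 * l) : x ∈ fB m ↔ x < 4 * l ∧ g x = m := by
  simp only [fB]
  split_ifs with hm2 <;> simp only [mem_insert, mem_singleton] <;> constructor
  · rintro (rfl | rfl) <;>
      refine ⟨by omega, ?_⟩ <;> (simp only [g]; split_ifs <;> omega)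
  · rintro ⟨h1, h2⟩
    simp only [g] at h2; split_ifs at h2 <;> omega
  · rintro (rfl | rfl) <;>
      refine ⟨by omega, ?_⟩ <;> (simp only [g]; split_ifs <;> omega)
  · rintro ⟨h1, h2⟩
    simp only [g] at h2; split_ifs at h2 <;> omega

lemma Aset_eq_biUnion {l : ℕ} {S : Finset ℕ} (hS : S ⊆ range (2 * l)) :
    Aset l S = S.biUnion (fun j => {2 * j, 2 * j + 1}) := by
  ext x
  simp only [mem_Aset, mem_biUnion, mem_insert, mem_singleton]
  constructor
  · rintro ⟨h1, h2⟩; exact ⟨x / 2, h2, by omega⟩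
  · rintro ⟨j, hj, hx⟩
    have hr := mem_range.mp (hS hj)
    have hx2 : x / 2 = j := by omega
    exact ⟨by omega, hx2 ▸ hj⟩

lemma Aset_card {l : ℕ} {S : Finset ℕ} (hS : S ⊆ range (2 * l)) :
    (Aset l S).card = 2 * S.card := by
  rw [Aset_eq_biUnion hS, card_biUnion]
  · rw [Finset.sum_congr rfl (fun j _ => ?_), Finset.sum_const, smul_eq_mul, mul_comm]
    rw [Finset.card_insert_of_notMem (by simp only [mem_singleton]; omega), card_singleton]
  · intro a _ b _ hab
    simp only [disjoint_left, mem_insert, mem_singleton]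
    omega

lemma Bset_eq_biUnion {l : ℕ} {S : Finset ℕ} (hS : S ⊆ range (2 * l)) :
    Bset l S = S.biUnion fB := by
  ext x
  simp only [mem_Bset, mem_biUnion]
  constructor
  · rintro ⟨h1, h2⟩
    exact ⟨g x, h2, (mem_fB (mem_range.mp (hS h2))).2 ⟨h1, rfl⟩⟩
  · rintro ⟨m, hm, hx⟩
    have h := (mem_fB (mem_range.mp (hS hm))).1 hx
    exact ⟨h.1, h.2 ▸ hm⟩

lemma Bset_card {l : ℕ} {S : Finset ℕ} (hS : S ⊆ range (2 * l)) :
    (Bset l S).card = 2 * S.card := by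
  rw [Bset_eq_biUnion hS, card_biUnion]
  · rw [Finset.sum_congr rfl (fun m hm => ?_), Finset.sum_const, smul_eq_mul, mul_comm]
    have hr := mem_range.mp (hS hm)
    simp only [fB]
    split_ifs with h
    · rw [Finset.card_insert_of_notMem (by simp only [mem_singleton]; omega), card_singleton]
    · rw [Finset.card_insert_of_notMem (by simp only [mem_singleton]; omega), card_singleton]
  · intro a ha b hb hab
    simp only [disjoint_left]
    intro x hxa hxb
    have h1 := (mem_fB (mem_range.mp (hS ha))).1 hxa
    have h2 := (mem_fB (mem_range.mp (hS hb))).1 hxb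
    exact hab (h1.2 ▸ h2.2 ▸ rfl)

lemma Aset_inter {l : ℕ} (J J' : Finset ℕ) :
    Aset l J ∩ Aset l J' = Aset l (J ∩ J') := by
  ext x; simp only [mem_inter, mem_Aset]; tauto

lemma Bset_inter {l : ℕ} (K K' : Finset ℕ) :
    Bset l K ∩ Bset l K' = Bset l (K ∩ K') := by
  ext x; simp only [mem_inter, mem_Bset]; tauto

lemma Aset_injOn (l : ℕ) :
    Set.InjOn (Aset l) ((range (2 * l)).powerset : Finset (Finset ℕ)) := by
  intro J hJ J' hJ' h
  simp only [coe_powerset, Set.mem_preimage, Set.mem_powerset_iff, coe_range] at hJ hJ'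
  ext j
  constructor
  · intro hj
    have hjl : j < 2 * l := by simpa using hJ hj
    have : 2 * j ∈ Aset l J := mem_Aset.2 ⟨by omega, by simpa [Nat.mul_div_cancel_left] using hj⟩
    rw [h] at this
    have := (mem_Aset.1 this).2
    simpa [Nat.mul_div_cancel_left] using this
  · intro hj
    have hjl : j < 2 * l := by simpa using hJ' hj
    have : 2 * j ∈ Aset l J' := mem_Aset.2 ⟨by omega, by simpa [Nat.mul_div_cancel_left] using hj⟩
    rw [← h] at this
    have := (mem_Aset.1 this).2
    simpa [Nat.mul_div_cancel_left] using this

lemma Bset_injOn (l : ℕ) :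
    Set.InjOn (Bset l) ((range (2 * l)).powerset : Finset (Finset ℕ)) := by
  intro K hK K' hK' h
  simp only [coe_powerset, Set.mem_preimage, Set.mem_powerset_iff, coe_range] at hK hK'
  ext m
  constructor
  · intro hm
    have hml : m < 2 * l := by simpa using hK hm
    have : 2 * m ∈ Bset l K := mem_Bset.2 ⟨by omega, by rw [g_two_mul]; exact hm⟩
    rw [h] at this
    have := (mem_Bset.1 this).2
    rwa [g_two_mul] at this
  · intro hm
    have hml : m < 2 * l := by simpa using hK' hm
    have : 2 * m ∈ Bset l K' := mem_Bset.2 ⟨by omega, by rw [g_two_mul]; exact hm⟩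
    rw [← h] at this
    have := (mem_Bset.1 this).2
    rwa [g_two_mul] at this

lemma four_mem_Aset {l i : ℕ} (hi : i < l) {J : Finset ℕ} :
    (4 * i ∈ Aset l J ↔ 2 * i ∈ J) ∧ (4 * i + 1 ∈ Aset l J ↔ 2 * i ∈ J) := by
  constructor <;> rw [mem_Aset] <;>
    constructor
  · rintro ⟨_, h⟩; rwa [show 4 * i / 2 = 2 * i by omega] at h
  · intro h; exact ⟨by omega, by rwa [show 4 * i / 2 = 2 * i by omega]⟩
  · rintro ⟨_, h⟩; rwa [show (4 * i + 1) / 2 = 2 * i by omega] at h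
  · intro h; exact ⟨by omega, by rwa [show (4 * i + 1) / 2 = 2 * i by omega]⟩

lemma four_mem_Bset {l i : ℕ} (hi : i < l) {K : Finset ℕ} :
    (4 * i ∈ Bset l K ↔ 2 * i ∈ K) ∧ (4 * i + 1 ∈ Bset l K ↔ 2 * i + 1 ∈ K) := by
  constructor <;> rw [mem_Bset]
  · rw [g_four]; exact ⟨fun h => h.2, fun h => ⟨by omega, h⟩⟩
  · rw [g_four_one]; exact ⟨fun h => h.2, fun h => ⟨by omega, h⟩⟩

lemma flip_card {l i0 : ℕ} (hi : i0 < l) {K : Finset ℕ}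
    (hK : (2 * i0 ∈ K ↔ 2 * i0 + 1 ∉ K)) {J : Finset ℕ} (hJ : 2 * i0 ∉ J) :
    (Aset l (insert (2 * i0) J) ∩ Bset l K).card
      = (Aset l J ∩ Bset l K).card + 1 := by
  have hsplit : Aset l (insert (2 * i0) J) ∩ Bset l K
      = ({4 * i0, 4 * i0 + 1} ∩ Bset l K) ∪ (Aset l J ∩ Bset l K) := by
    ext x
    simp only [mem_inter, mem_union, mem_Aset, mem_insert, mem_singleton]
    constructor
    · rintro ⟨⟨hx1, hx2 | hx2⟩, hx3⟩
      · left; exact ⟨by omega, hx3⟩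
      · right; exact ⟨⟨hx1, hx2⟩, hx3⟩
    · rintro (⟨hx1, hx2⟩ | ⟨⟨hx1, hx2⟩, hx3⟩)
      · exact ⟨⟨by omega, by left; omega⟩, hx2⟩
      · exact ⟨⟨hx1, Or.inr hx2⟩, hx3⟩
  have hdisj : Disjoint ({4 * i0, 4 * i0 + 1} ∩ Bset l K) (Aset l J ∩ Bset l K) := by
    simp only [disjoint_left, mem_inter, mem_insert, mem_singleton, mem_Aset]
    rintro x ⟨hx1 | hx1, _⟩ ⟨⟨_, hx3⟩, _⟩ <;> subst hx1 <;>
      [rw [show 4 * i0 / 2 = 2 * i0 by omega] at hx3;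
       rw [show (4 * i0 + 1) / 2 = 2 * i0 by omega] at hx3] <;> exact hJ hx3
  have hone : ({4 * i0, 4 * i0 + 1} ∩ Bset l K).card = 1 := by
    by_cases h : 2 * i0 ∈ K
    · have h' : 2 * i0 + 1 ∉ K := hK.1 h
      have : ({4 * i0, 4 * i0 + 1} : Finset ℕ) ∩ Bset l K = {4 * i0} := by
        ext x
        simp only [mem_inter, mem_insert, mem_singleton]
        constructor
        · rintro ⟨hx1 | hx1, hx2⟩
          · exact hx1
          · subst hx1; exact absurd ((four_mem_Bset hi).2.1 hx2) h'
        · rintro rfl; exact ⟨Or.inl rfl, (four_mem_Bset hi).1.2 h⟩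
      rw [this, card_singleton]
    · have h' : 2 * i0 + 1 ∈ K := by tauto
      have : ({4 * i0, 4 * i0 + 1} : Finset ℕ) ∩ Bset l K = {4 * i0 + 1} := by
        ext x
        simp only [mem_inter, mem_insert, mem_singleton]
        constructor
        · rintro ⟨hx1 | hx1, hx2⟩
          · subst hx1; exact absurd ((four_mem_Bset hi).1.1 hx2) h
          · exact hx1
        · rintro rfl; exact ⟨Or.inr rfl, (four_mem_Bset hi).2.2 h'⟩
      rw [this, card_singleton]
  rw [hsplit, card_union_of_disjoint hdisj, hone]
  omega

lemma flip_parity {l i0 : ℕ} (hi : i0 < l) {K : Finset ℕ}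
    (hK : (2 * i0 ∈ K ↔ 2 * i0 + 1 ∉ K)) (J : Finset ℕ) :
    Odd ((Aset l (if 2 * i0 ∈ J then J.erase (2 * i0) else insert (2 * i0) J)
        ∩ Bset l K).card)
      ↔ ¬ Odd ((Aset l J ∩ Bset l K).card) := by
  split_ifs with h
  · have h1 : insert (2 * i0) (J.erase (2 * i0)) = J := insert_erase h
    have h2 := flip_card hi hK (notMem_erase (2 * i0) J)
    rw [h1] at h2
    rw [h2]
    simp [Nat.odd_add_one]
  · rw [flip_card hi hK h]
    simp [Nat.odd_add_one]

lemma count_odd {l i0 : ℕ} (hi : i0 < l) {K : Finset ℕ}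
    (hK : (2 * i0 ∈ K ↔ 2 * i0 + 1 ∉ K)) :
    (((range (2 * l)).powerset).filter
        (fun J => Odd ((Aset l J ∩ Bset l K).card))).card = 2 ^ (2 * l - 1) := by
  set T := (range (2 * l)).powerset with hT
  let p : Finset ℕ → Prop := fun J => Odd ((Aset l J ∩ Bset l K).card)
  show (T.filter p).card = 2 ^ (2 * l - 1)
  set σ : Finset ℕ → Finset ℕ :=
    fun J => if 2 * i0 ∈ J then J.erase (2 * i0) else insert (2 * i0) J with hσ
  have hσT : ∀ J ∈ T, σ J ∈ T := by
    intro J hJ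
    simp only [hT, mem_powerset] at hJ ⊢
    simp only [hσ]
    split_ifs with h
    · exact (erase_subset _ _).trans hJ
    · exact insert_subset (mem_range.2 (by omega)) hJ
  have hσσ : ∀ J, σ (σ J) = J := by
    intro J
    by_cases h : 2 * i0 ∈ J
    · simp only [hσ, if_pos h, if_neg (notMem_erase _ _), insert_erase h]
    · simp only [hσ, if_neg h, if_pos (mem_insert_self _ _), erase_insert h]
  have hflip : ∀ J, p (σ J) ↔ ¬ p J := fun J => flip_parity hi hK J
  have hcardeq : (T.filter p).card = (T.filter (fun J => ¬ p J)).card := by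
    apply Finset.card_bij' (fun J _ => σ J) (fun J _ => σ J)
    · intro J hJ
      simp only [mem_filter] at hJ ⊢
      exact ⟨hσT J hJ.1, fun hc => (hflip J).1 hc hJ.2⟩
    · intro J hJ
      simp only [mem_filter] at hJ ⊢
      exact ⟨hσT J hJ.1, (hflip J).2 hJ.2⟩
    · intro J _; exact hσσ J
    · intro J _; exact hσσ J
  have hsum := Finset.card_filter_add_card_filter_not (s := T) (p := p)
  have hTcard : T.card = 2 ^ (2 * l) := by
    simp [hT, card_powerset, card_range]
  have hpow : 2 ^ (2 * l) = 2 * 2 ^ (2 * l - 1) := by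
    rw [← pow_succ']
    congr 1
    omega
  have hmain : 2 * (T.filter p).card = 2 ^ (2 * l) := by
    rw [two_mul]
    nth_rewrite 2 [hcardeq]
    rw [hsum, hTcard]
  omega

/-- the family of "good" index sets `K` (those with a mixed block) -/
def good (l : ℕ) : Finset (Finset ℕ) :=
  (range (2 * l)).powerset.filter
    (fun K => ∃ i ∈ range l, ((2 * i ∈ K) ↔ (2 * i + 1 ∉ K)))

lemma good_card_ge (l : ℕ) : 2 ^ (2 * l) - 2 ^ l ≤ (good l).card := by
  classical
  set q : Finset ℕ → Prop :=
    fun K => ∃ i ∈ range l, ((2 * i ∈ K) ↔ (2 * i + 1 ∉ K)) with hq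
  have hbad : ((range (2 * l)).powerset.filter (fun K => ¬ q K)).card ≤ 2 ^ l := by
    have : ((range (2 * l)).powerset.filter (fun K => ¬ q K)).card
        ≤ ((range l).powerset).card := by
      apply Finset.card_le_card_of_injOn (fun K => K.image (· / 2))
      · intro K hK
        simp only [mem_coe, mem_filter, mem_powerset] at hK
        simp only [mem_coe, mem_powerset]
        intro i hi
        simp only [mem_image] at hi
        obtain ⟨m, hm, rfl⟩ := hi
        have := mem_range.mp (hK.1 hm)
        exact mem_range.2 (by omega)
      · intro K hK K' hK' himg
        simp only [coe_filter, Set.mem_setOf_eq, mem_powerset] at hK hK'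
        have hcl : ∀ (K₀ : Finset ℕ), K₀ ⊆ range (2 * l) → ¬ q K₀ →
            ∀ i < l, (2 * i ∈ K₀ ↔ 2 * i + 1 ∈ K₀) := by
          intro K₀ _ hnq i hil
          simp only [hq, not_exists, mem_range] at hnq
          have := hnq i
          tauto
        have hstep : ∀ (K₁ K₂ : Finset ℕ), K₁ ⊆ range (2 * l) → ¬ q K₁ →
            K₂ ⊆ range (2 * l) → ¬ q K₂ →
            K₁.image (· / 2) = K₂.image (· / 2) → ∀ m ∈ K₁, m ∈ K₂ := by
          intro K₁ K₂ h₁ hq₁ h₂ hq₂ him m hm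
          have hml := mem_range.mp (h₁ hm)
          have : m / 2 ∈ K₂.image (· / 2) := by
            rw [← him]; exact mem_image_of_mem _ hm
          simp only [mem_image] at this
          obtain ⟨m', hm', hd⟩ := this
          have hm'l := mem_range.mp (h₂ hm')
          have hcl₂ := hcl K₂ h₂ hq₂ (m / 2) (by omega)
          have hboth : 2 * (m / 2) ∈ K₂ ∧ 2 * (m / 2) + 1 ∈ K₂ := by
            have : m' = 2 * (m / 2) ∨ m' = 2 * (m / 2) + 1 := by omega
            rcases this with rfl | rfl
            · exact ⟨hm', hcl₂.1 hm'⟩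
            · exact ⟨hcl₂.2 hm', hm'⟩
          have : m = 2 * (m / 2) ∨ m = 2 * (m / 2) + 1 := by omega
          rcases this with h | h <;> rw [h]
          · exact hboth.1
          · exact hboth.2
        ext m
        exact ⟨fun h => hstep K K' hK.1 hK.2 hK'.1 hK'.2 himg m h,
               fun h => hstep K' K hK'.1 hK'.2 hK.1 hK.2 himg.symm m h⟩
    simpa [card_powerset, card_range] using this
  have hsum := Finset.card_filter_add_card_filter_not
    (s := (range (2 * l)).powerset) (p := q)
  have hTcard : ((range (2 * l)).powerset).card = 2 ^ (2 * l) := by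
    simp [card_powerset, card_range]
  have : (good l).card = ((range (2 * l)).powerset.filter q).card := rfl
  omega

end ESTight
open Finset ESTight in
/-- Tightness of eventown supersaturation: for `n = 4l`, `k = 2l`, and any
`1 ≤ s ≤ 2^k - 2^l`, there is a family of `2^k + s` even-sized subsets of
`[n]` with exactly `s · 2^(k-1)` unordered pairs of odd-sized intersection
(ordered-pair count via `offDiag`, hence the factor `2`). -/
theorem eventown_supersat_tight (l s : ℕ) (hs₁ : 1 ≤ s)
    (hs₂ : s ≤ 2 ^ (2 * l) - 2 ^ l) :
    ∃ 𝒜 : Finset (Finset ℕ),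
      (∀ A ∈ 𝒜, A ⊆ Finset.range (4 * l)) ∧
      𝒜.card = 2 ^ (2 * l) + s ∧
      (∀ A ∈ 𝒜, Even A.card) ∧
      (𝒜.offDiag.filter fun p => Odd ((p.1 ∩ p.2).card)).card =
        2 * (s * 2 ^ (2 * l - 1)) := by
  classical
  obtain ⟨𝒦, h𝒦sub, h𝒦card⟩ :=
    Finset.exists_subset_card_eq (s := good l) (n := s) (hs₂.trans (good_card_ge l))
  have h𝒦pow : 𝒦 ⊆ (range (2 * l)).powerset := h𝒦sub.trans (filter_subset _ _)
  have h𝒦 : ∀ K ∈ 𝒦, K ⊆ range (2 * l) ∧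
      ∃ i0, i0 < l ∧ (2 * i0 ∈ K ↔ 2 * i0 + 1 ∉ K) := by
    intro K hK
    have := h𝒦sub hK
    simp only [good, mem_filter, mem_powerset, mem_range] at this
    obtain ⟨h1, i, hi, hx⟩ := this
    exact ⟨h1, i, hi, hx⟩
  set AF := (range (2 * l)).powerset.image (Aset l) with hAF
  set BF := 𝒦.image (Bset l) with hBF
  -- disjointness
  have hdisj : Disjoint AF BF := by
    rw [disjoint_left]
    intro X hXA hXB
    obtain ⟨J, hJ, rfl⟩ := mem_image.1 hXA
    obtain ⟨K, hK, hEq⟩ := mem_image.1 hXB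
    obtain ⟨hKsub, i0, hi0, hxor⟩ := h𝒦 K hK
    have e1 := (four_mem_Bset (l := l) (i := i0) hi0 (K := K)).1
    have e2 := (four_mem_Bset (l := l) (i := i0) hi0 (K := K)).2
    rw [hEq] at e1 e2
    have a1 := (four_mem_Aset (l := l) (i := i0) hi0 (J := J)).1
    have a2 := (four_mem_Aset (l := l) (i := i0) hi0 (J := J)).2
    tauto
  -- evenness
  have heven : ∀ A ∈ AF ∪ BF, Even A.card := by
    intro A hA
    rcases mem_union.1 hA with h | h
    · obtain ⟨J, hJ, rfl⟩ := mem_image.1 h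
      rw [Aset_card (mem_powerset.1 hJ)]
      exact even_two_mul _
    · obtain ⟨K, hK, rfl⟩ := mem_image.1 h
      rw [Bset_card (mem_powerset.1 (h𝒦pow hK))]
      exact even_two_mul _
  -- cardinality
  have hAFcard : AF.card = 2 ^ (2 * l) := by
    rw [hAF, Finset.card_image_of_injOn (Aset_injOn l), card_powerset, card_range]
  have hBFcard : BF.card = s := by
    rw [hBF, Finset.card_image_of_injOn ((Bset_injOn l).mono (coe_subset.2 h𝒦pow)), h𝒦card]
  refine ⟨AF ∪ BF, ?_, ?_, heven, ?_⟩
  · intro A hA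
    rcases mem_union.1 hA with h | h
    · obtain ⟨J, _, rfl⟩ := mem_image.1 h
      exact filter_subset _ _
    · obtain ⟨K, _, rfl⟩ := mem_image.1 h
      exact filter_subset _ _
  · rw [card_union_of_disjoint hdisj, hAFcard, hBFcard]
  · -- the count
    have hstep1 : (AF ∪ BF).offDiag.filter (fun p => Odd ((p.1 ∩ p.2).card))
        = ((AF ∪ BF) ×ˢ (AF ∪ BF)).filter (fun p => Odd ((p.1 ∩ p.2).card)) := by
      ext ⟨X, Y⟩
      simp only [mem_filter, mem_offDiag, mem_product]
      constructor
      · rintro ⟨⟨h1, h2, _⟩, h4⟩; exact ⟨⟨h1, h2⟩, h4⟩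
      · rintro ⟨⟨h1, h2⟩, h4⟩
        refine ⟨⟨h1, h2, fun hEq => ?_⟩, h4⟩
        subst hEq
        rw [inter_self] at h4
        exact (Nat.not_even_iff_odd.2 h4) (heven X h1)
    have hstep2 : (((AF ∪ BF) ×ˢ (AF ∪ BF)).filter
          (fun p => Odd ((p.1 ∩ p.2).card))).card
        = ∑ X ∈ AF ∪ BF, ((AF ∪ BF).filter (fun Y => Odd ((X ∩ Y).card))).card := by
      simp only [Finset.card_filter]
      rw [Finset.sum_product]
    have hAAzero : ∀ X ∈ AF, (AF.filter (fun Y => Odd ((X ∩ Y).card))) = ∅ := by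
      intro X hX
      rw [Finset.filter_eq_empty_iff]
      intro Y hY
      obtain ⟨J, hJ, rfl⟩ := mem_image.1 hX
      obtain ⟨J', hJ', rfl⟩ := mem_image.1 hY
      rw [Aset_inter, Aset_card (inter_subset_left.trans (mem_powerset.1 hJ))]
      exact (Nat.not_odd_iff_even).2 (even_two_mul _)
    have hBBzero : ∀ X ∈ BF, (BF.filter (fun Y => Odd ((X ∩ Y).card))) = ∅ := by
      intro X hX
      rw [Finset.filter_eq_empty_iff]
      intro Y hY
      obtain ⟨K, hK, rfl⟩ := mem_image.1 hX
      obtain ⟨K', hK', rfl⟩ := mem_image.1 hY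
      rw [Bset_inter, Bset_card (inter_subset_left.trans (mem_powerset.1 (h𝒦pow hK)))]
      exact (Nat.not_odd_iff_even).2 (even_two_mul _)
    have hcross : ∀ K ∈ 𝒦,
        (AF.filter (fun Y => Odd ((Bset l K ∩ Y).card))).card = 2 ^ (2 * l - 1) := by
      intro K hK
      obtain ⟨hKsub, i0, hi0, hxor⟩ := h𝒦 K hK
      rw [hAF, Finset.filter_image,
        Finset.card_image_of_injOn ((Aset_injOn l).mono (coe_subset.2 (filter_subset _ _)))]
      rw [Finset.filter_congr (fun J _ => by rw [inter_comm] :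
        ∀ J ∈ (range (2 * l)).powerset,
          Odd ((Bset l K ∩ Aset l J).card) ↔ Odd ((Aset l J ∩ Bset l K).card))]
      exact count_odd hi0 hxor
    have hBsum : ∑ X ∈ BF, (AF.filter (fun Y => Odd ((X ∩ Y).card))).card
        = s * 2 ^ (2 * l - 1) := by
      rw [hBF, Finset.sum_image (fun x hx y hy h =>
        Bset_injOn l (mem_coe.2 (h𝒦pow hx)) (mem_coe.2 (h𝒦pow hy)) h)]
      rw [Finset.sum_congr rfl (fun K hK => hcross K hK), Finset.sum_const, smul_eq_mul,
        h𝒦card]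
    have hsym : ∑ X ∈ AF, (BF.filter (fun Y => Odd ((X ∩ Y).card))).card
        = ∑ X ∈ BF, (AF.filter (fun Y => Odd ((X ∩ Y).card))).card := by
      simp only [Finset.card_filter]
      rw [Finset.sum_comm]
      exact Finset.sum_congr rfl fun Y _ => Finset.sum_congr rfl fun X _ => by
        rw [inter_comm]
    have hinner : ∀ X, ((AF ∪ BF).filter (fun Y => Odd ((X ∩ Y).card))).card
        = (AF.filter (fun Y => Odd ((X ∩ Y).card))).card
          + (BF.filter (fun Y => Odd ((X ∩ Y).card))).card := by
      intro X
      rw [Finset.filter_union, card_union_of_disjoint (Finset.disjoint_filter_filter hdisj)]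
    rw [hstep1, hstep2]
    rw [Finset.sum_union hdisj]
    simp only [hinner]
    rw [Finset.sum_add_distrib, Finset.sum_add_distrib]
    have z1 : ∑ X ∈ AF, (AF.filter (fun Y => Odd ((X ∩ Y).card))).card = 0 :=
      Finset.sum_eq_zero fun X hX => by rw [hAAzero X hX, card_empty]
    have z2 : ∑ X ∈ BF, (BF.filter (fun Y => Odd ((X ∩ Y).card))).card = 0 :=
      Finset.sum_eq_zero fun X hX => by rw [hBBzero X hX, card_empty]
    rw [z1, z2, hsym, hBsum]
    ring
end

section
/- For each B in the family B that is not in the family A (of the standard two-eventown construction on n = 4l points), the number of sets A ∈ A with |A ∩ B| odd is exactly 2^(k−1), where k = 2l. -/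
/-- The basic pair `A_j` in the `i`-th block (`j = 2i` or `j = 2i+1`, zero
indexed): `A_{2i} = {x₁ᵢ, x₂ᵢ}`, `A_{2i+1} = {x₃ᵢ, x₄ᵢ}`, where the block
`Xᵢ = {4i, 4i+1, 4i+2, 4i+3}`. -/
def blockA (j : ℕ) : Finset ℕ :=
  {4 * (j / 2) + 2 * (j % 2), 4 * (j / 2) + 2 * (j % 2) + 1}

/-- The basic pair `B_j`: `B_{2i} = {x₁ᵢ, x₄ᵢ}`, `B_{2i+1} = {x₂ᵢ, x₃ᵢ}`. -/
def blockB (j : ℕ) : Finset ℕ :=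
  if j % 2 = 0 then {4 * (j / 2), 4 * (j / 2) + 3}
  else {4 * (j / 2) + 1, 4 * (j / 2) + 2}

/-- The eventown family `𝒜 = {⋃_{j ∈ J} A_j : J ⊆ [k]}`. -/
def famA (k : ℕ) : Finset (Finset ℕ) :=
  (Finset.range k).powerset.image fun J => J.biUnion blockA

/-- The eventown family `ℬ = {⋃_{j ∈ J} B_j : J ⊆ [k]}`. -/
def famB (k : ℕ) : Finset (Finset ℕ) :=
  (Finset.range k).powerset.image fun J => J.biUnion blockB

open Finset

lemma mem_blockA {x j : ℕ} : x ∈ blockA j ↔ x = 2 * j ∨ x = 2 * j + 1 := by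
  have h1 : 4 * (j / 2) + 2 * (j % 2) = 2 * j := by omega
  simp [blockA, h1]

lemma mem_blockB {x j : ℕ} : x ∈ blockB j ↔
    (j % 2 = 0 ∧ (x = 2 * j ∨ x = 2 * j + 3)) ∨
    (j % 2 = 1 ∧ (x = 2 * j - 1 ∨ x = 2 * j)) := by
  unfold blockB
  split <;> rename_i h <;> simp <;> omega

lemma blockA_disj {j j' : ℕ} (h : j ≠ j') : Disjoint (blockA j) (blockA j') := by
  simp only [Finset.disjoint_left, mem_blockA]
  omega

lemma biUnion_blockA_inj : Function.Injective (fun J : Finset ℕ => J.biUnion blockA) := by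
  have key : ∀ (K : Finset ℕ) (j : ℕ), j ∈ K ↔ 2 * j ∈ K.biUnion blockA := by
    intro K j
    simp only [mem_biUnion, mem_blockA]
    constructor
    · intro h; exact ⟨j, h, Or.inl rfl⟩
    · rintro ⟨j', hj', h⟩
      have : j = j' := by omega
      exact this ▸ hj'
  intro J J' h
  simp only at h
  ext j
  rw [key J j, key J' j, h]

lemma mem_B (J : Finset ℕ) (i : ℕ) :
    (4 * i ∈ J.biUnion blockB ↔ 2 * i ∈ J) ∧
    (4 * i + 1 ∈ J.biUnion blockB ↔ 2 * i + 1 ∈ J) := by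
  constructor <;>
  · simp only [mem_biUnion, mem_blockB]
    constructor
    · rintro ⟨j, hj, h⟩
      rcases h with ⟨h1, h2 | h2⟩ | ⟨h1, h2 | h2⟩ <;>
        first
          | (have hji : j = 2 * i := by omega
             exact hji ▸ hj)
          | (have hji : j = 2 * i + 1 := by omega
             exact hji ▸ hj)
    · intro h
      first
        | exact ⟨2 * i, h, Or.inl ⟨by omega, Or.inl (by omega)⟩⟩
        | exact ⟨2 * i + 1, h, Or.inr ⟨by omega, Or.inl (by omega)⟩⟩

/-- If every pair is all-or-nothing, the B-union equals the A-union. -/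
lemma biUnion_eq_of_pairs (J : Finset ℕ) (h : ∀ i, 2 * i ∈ J ↔ 2 * i + 1 ∈ J) :
    J.biUnion blockB = J.biUnion blockA := by
  ext x
  simp only [mem_biUnion, mem_blockA, mem_blockB]
  constructor
  · rintro ⟨j, hj, hx⟩
    rcases hx with ⟨h1, h2 | h2⟩ | ⟨h1, h2 | h2⟩
    · exact ⟨j, hj, Or.inl h2⟩
    · refine ⟨j + 1, ?_, Or.inr (by omega)⟩
      have e1 : 2 * (j / 2) ∈ J := by rwa [show 2 * (j / 2) = j by omega]
      have e2 := (h (j / 2)).mp e1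
      rwa [show 2 * (j / 2) + 1 = j + 1 by omega] at e2
    · refine ⟨j - 1, ?_, Or.inr (by omega)⟩
      have e1 : 2 * (j / 2) + 1 ∈ J := by rwa [show 2 * (j / 2) + 1 = j by omega]
      have e2 := (h (j / 2)).mpr e1
      rwa [show 2 * (j / 2) = j - 1 by omega] at e2
    · exact ⟨j, hj, Or.inl h2⟩
  · rintro ⟨j, hj, h2 | h2⟩
    · rcases Nat.mod_two_eq_zero_or_one j with h1 | h1
      · exact ⟨j, hj, Or.inl ⟨h1, Or.inl h2⟩⟩
      · exact ⟨j, hj, Or.inr ⟨h1, Or.inr h2⟩⟩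
    · rcases Nat.mod_two_eq_zero_or_one j with h1 | h1
      · refine ⟨j + 1, ?_, Or.inr ⟨by omega, Or.inl (by omega)⟩⟩
        have e1 : 2 * (j / 2) ∈ J := by rwa [show 2 * (j / 2) = j by omega]
        have e2 := (h (j / 2)).mp e1
        rwa [show 2 * (j / 2) + 1 = j + 1 by omega] at e2
      · refine ⟨j - 1, ?_, Or.inl ⟨by omega, Or.inr (by omega)⟩⟩
        have e1 : 2 * (j / 2) + 1 ∈ J := by rwa [show 2 * (j / 2) + 1 = j by omega]
        have e2 := (h (j / 2)).mpr e1
        rwa [show 2 * (j / 2) = j - 1 by omega] at e2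

lemma exists_odd_block {J : Finset ℕ} {k : ℕ} (hJ : J ⊆ Finset.range k)
    (hnot : J.biUnion blockB ∉ famA k) :
    ∃ j ∈ Finset.range k, Odd ((blockA j ∩ J.biUnion blockB).card) := by
  by_cases hpairs : ∀ i, 2 * i ∈ J ↔ 2 * i + 1 ∈ J
  · exfalso
    exact hnot (Finset.mem_image.mpr ⟨J, Finset.mem_powerset.mpr hJ,
      (biUnion_eq_of_pairs J hpairs).symm⟩)
  · push_neg at hpairs
    obtain ⟨i, hi⟩ := hpairs
    have hb0 := (mem_B J i).1
    have hb1 := (mem_B J i).2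
    have hik : 2 * i ∈ Finset.range k := by
      rcases Classical.em (2 * i ∈ J) with h | h
      · exact hJ h
      · have h' : 2 * i + 1 ∈ J := by tauto
        have := Finset.mem_range.mp (hJ h')
        exact Finset.mem_range.mpr (by omega)
    refine ⟨2 * i, hik, ?_⟩
    rcases Classical.em (2 * i ∈ J) with h0 | h0
    · have h1 : 2 * i + 1 ∉ J := by tauto
      have he : blockA (2 * i) ∩ J.biUnion blockB = {4 * i} := by
        ext x
        simp only [mem_inter, mem_blockA, mem_singleton]
        constructor
        · rintro ⟨hx | hx, hxB⟩
          · omega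
          · rw [show x = 4 * i + 1 by omega] at hxB
            exact absurd (hb1.mp hxB) h1
        · intro hx
          subst hx
          exact ⟨Or.inl (by omega), hb0.mpr h0⟩
      rw [he, card_singleton]
      exact odd_one
    · have h1 : 2 * i + 1 ∈ J := by tauto
      have he : blockA (2 * i) ∩ J.biUnion blockB = {4 * i + 1} := by
        ext x
        simp only [mem_inter, mem_blockA, mem_singleton]
        constructor
        · rintro ⟨hx | hx, hxB⟩
          · rw [show x = 4 * i by omega] at hxB
            exact absurd (hb0.mp hxB) h0
          · omega
        · intro hx
          subst hx
          exact ⟨Or.inr (by omega), hb1.mpr h1⟩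
      rw [he, card_singleton]
      exact odd_one

lemma count_odd_inter (k : ℕ) (S : Finset ℕ) (hS : S ⊆ Finset.range k)
    (hne : S.Nonempty) :
    (((Finset.range k).powerset).filter fun J => Odd ((J ∩ S).card)).card
      = 2 ^ (k - 1) := by
  classical
  obtain ⟨a, ha⟩ := hne
  have hak : a < k := Finset.mem_range.mp (hS ha)
  set P := (Finset.range k).powerset with hP
  set g : Finset ℕ → Finset ℕ := fun J => if a ∈ J then J.erase a else insert a J with hg
  have hpar : ∀ J : Finset ℕ, Odd ((g J ∩ S).card) ↔ ¬ Odd ((J ∩ S).card) := by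
    intro J
    simp only [hg]
    split <;> rename_i haJ
    · have h1 : J.erase a ∩ S = (J ∩ S).erase a := by
        ext x
        simp only [mem_erase, mem_inter]
        tauto
      have h2 : a ∈ J ∩ S := mem_inter.mpr ⟨haJ, ha⟩
      rw [h1, card_erase_of_mem h2]
      have hpos := card_pos.mpr ⟨a, h2⟩
      rw [Nat.odd_iff, Nat.odd_iff]
      omega
    · have h1 : insert a J ∩ S = insert a (J ∩ S) := by
        ext x
        simp only [mem_insert, mem_inter]
        constructor
        · tauto
        · rintro (rfl | ⟨hx1, hx2⟩)
          · exact ⟨Or.inl rfl, ha⟩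
          · exact ⟨Or.inr hx1, hx2⟩
      rw [h1, card_insert_of_notMem (fun hx => haJ (mem_inter.mp hx).1)]
      rw [Nat.odd_iff, Nat.odd_iff]
      omega
  have hgP : ∀ J ∈ P, g J ∈ P := by
    intro J hJ
    simp only [hg]
    split
    · exact mem_powerset.mpr ((erase_subset _ _).trans (mem_powerset.mp hJ))
    · exact mem_powerset.mpr (insert_subset (mem_range.mpr hak) (mem_powerset.mp hJ))
  have hinv : ∀ J : Finset ℕ, g (g J) = J := by
    intro J
    simp only [hg]
    split <;> rename_i haJ
    · rw [if_neg (notMem_erase a J), insert_erase haJ]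
    · rw [if_pos (mem_insert_self a J), erase_insert haJ]
  have hcard : (P.filter fun J => Odd ((J ∩ S).card)).card
      = (P.filter fun J => ¬ Odd ((J ∩ S).card)).card := by
    apply Finset.card_nbij' g g
    · intro J hJ
      simp only [mem_coe, mem_filter] at hJ ⊢
      exact ⟨hgP J hJ.1, by rw [← hinv J] at hJ; exact ((hpar (g J)).mp hJ.2 : _)⟩
    · intro J hJ
      simp only [mem_coe, mem_filter] at hJ ⊢
      exact ⟨hgP J hJ.1, (hpar J).mpr hJ.2⟩
    · intro J hJ; exact hinv J
    · intro J hJ; exact hinv J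
  have htot := Finset.card_filter_add_card_filter_not
    (s := P) (p := fun J => Odd ((J ∩ S).card))
  have hPcard : P.card = 2 ^ k := by
    rw [hP, card_powerset, card_range]
  have hpow : 2 ^ k = 2 ^ (k - 1) * 2 := by
    rw [← pow_succ]
    congr 1
    omega
  omega

/-- For each `B ∈ ℬ \ 𝒜` in the standard two-eventown construction on
`n = 4l` points (`k = 2l`), exactly `2^(k-1)` sets `A ∈ 𝒜` satisfy
`|A ∩ B|` odd. -/
theorem odd_intersections_with_famA (l : ℕ) (B : Finset ℕ)
    (hB : B ∈ famB (2 * l) \ famA (2 * l)) :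
    ((famA (2 * l)).filter fun A => Odd ((A ∩ B).card)).card =
      2 ^ (2 * l - 1) := by
  classical
  obtain ⟨hmem, hnot⟩ := Finset.mem_sdiff.mp hB
  obtain ⟨J₀, hJ₀p, rfl⟩ := Finset.mem_image.mp hmem
  have hJ₀ : J₀ ⊆ Finset.range (2 * l) := Finset.mem_powerset.mp hJ₀p
  obtain ⟨j₀, hj₀k, hj₀odd⟩ := exists_odd_block hJ₀ hnot
  set S := (Finset.range (2 * l)).filter
    (fun j => Odd ((blockA j ∩ J₀.biUnion blockB).card)) with hSdef
  rw [famA, Finset.filter_image, Finset.card_image_of_injective _ biUnion_blockA_inj]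
  have hfe : (Finset.range (2 * l)).powerset.filter
        (fun J => Odd (((J.biUnion blockA) ∩ J₀.biUnion blockB).card))
      = (Finset.range (2 * l)).powerset.filter (fun J => Odd ((J ∩ S).card)) := by
    apply Finset.filter_congr
    intro J hJ
    have hJr : J ⊆ Finset.range (2 * l) := Finset.mem_powerset.mp hJ
    have hbi : (J.biUnion blockA) ∩ (J₀.biUnion blockB)
        = J.biUnion (fun j => blockA j ∩ J₀.biUnion blockB) := by
      ext x
      simp only [mem_inter, mem_biUnion]
      tauto
    have hdisj : ∀ x ∈ J, ∀ y ∈ J, x ≠ y →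
        Disjoint (blockA x ∩ J₀.biUnion blockB) (blockA y ∩ J₀.biUnion blockB) :=
      fun x _ y _ hxy =>
        (blockA_disj hxy).mono inter_subset_left inter_subset_left
    rw [hbi, Finset.card_biUnion hdisj, Finset.odd_sum_iff_odd_card_odd]
    have hfs : J.filter (fun j => Odd ((blockA j ∩ J₀.biUnion blockB).card)) = J ∩ S := by
      ext x
      simp only [hSdef, mem_filter, mem_inter]
      constructor
      · rintro ⟨h1, h2⟩
        exact ⟨h1, hJr h1, h2⟩
      · rintro ⟨h1, _, h3⟩
        exact ⟨h1, h3⟩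
    rw [hfs]
  rw [hfe]
  exact count_odd_inter (2 * l) S (Finset.filter_subset _ _)
    ⟨j₀, Finset.mem_filter.mpr ⟨hj₀k, hj₀odd⟩⟩
end

section
/- Let F be a family of k-element subsets of [n] with no two sets intersecting in exactly k−2 elements. Then for every (k−3)-element set A ⊆ [n], the link F(A) = {B ⊆ [n]\A : A ∪ B ∈ F} is an oddtown family (all members have size 3, odd, and pairwise intersections of even size), and hence |F(A)| ≤ n − k + 3. -/
open Finset

/-- Vectors over `ZMod 2` with unit self-dot-products and vanishing pairwise
dot products are linearly independent. -/
lemma linIndep_of_dot {ι α : Type*} [Fintype α] (v : ι → α → ZMod 2)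
    (hself : ∀ i, ∑ x, v i x * v i x = 1)
    (hpair : ∀ i j, i ≠ j → ∑ x, v i x * v j x = 0) :
    LinearIndependent (ZMod 2) v := by
  rw [linearIndependent_iff']
  intro s g hsum i hi
  have hfun : ∀ x, ∑ j ∈ s, g j * v j x = 0 := by
    intro x
    have := congrFun hsum x
    simpa using this
  have key : ∑ j ∈ s, g j * (∑ x, v j x * v i x) = 0 := by
    calc ∑ j ∈ s, g j * (∑ x, v j x * v i x)
        = ∑ j ∈ s, ∑ x, g j * (v j x * v i x) := by
          simp [Finset.mul_sum]
      _ = ∑ x, ∑ j ∈ s, g j * (v j x * v i x) := Finset.sum_comm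
      _ = ∑ x, (∑ j ∈ s, g j * v j x) * v i x := by
          simp [Finset.sum_mul, mul_assoc]
      _ = 0 := by simp [hfun]
  rw [Finset.sum_eq_single i (fun j _ hj => by rw [hpair j i hj, mul_zero])
    (fun h => absurd hi h)] at key
  rw [hself i, mul_one] at key
  exact key

/-- If `F` is a family of `k`-subsets of `[n]` with no two members meeting in
exactly `k - 2` elements, then for every `(k-3)`-set `A` the link
`F(A) = {B ⊆ [n] \ A : A ∪ B ∈ F}` is an oddtown family (3-element sets with
pairwise even intersections), and hence `|F(A)| ≤ n - k + 3`. -/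
theorem link_is_oddtown (n k : ℕ) (hk : 4 ≤ k) (F : Finset (Finset (Fin n)))
    (huniform : ∀ S ∈ F, S.card = k)
    (havoid : ∀ S ∈ F, ∀ T ∈ F, S ≠ T → (S ∩ T).card ≠ k - 2)
    (A : Finset (Fin n)) (hA : A.card = k - 3) :
    let L : Finset (Finset (Fin n)) :=
      (Finset.univ : Finset (Fin n)).powerset.filter
        fun B => B ∩ A = ∅ ∧ A ∪ B ∈ F
    (∀ B ∈ L, B.card = 3) ∧
    (∀ B ∈ L, ∀ B' ∈ L, B ≠ B' → Even ((B ∩ B').card)) ∧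
    L.card ≤ n - k + 3 := by
  intro L
  have hkA : k - 3 ≤ n := hA ▸ (A.card_le_univ.trans_eq (by simp))
  have hmem : ∀ B ∈ L, Disjoint A B ∧ A ∪ B ∈ F := by
    intro B hB
    rw [Finset.mem_filter] at hB
    exact ⟨Finset.disjoint_left.mpr fun a ha hB' =>
      Finset.notMem_empty a (hB.2.1 ▸ Finset.mem_inter.mpr ⟨hB', ha⟩), hB.2.2⟩
  -- each member has 3 elements
  have hcard3 : ∀ B ∈ L, B.card = 3 := by
    intro B hB
    obtain ⟨hdisj, hF⟩ := hmem B hB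
    have := huniform _ hF
    rw [Finset.card_union_of_disjoint hdisj, hA] at this
    omega
  -- pairwise even intersections
  have heven : ∀ B ∈ L, ∀ B' ∈ L, B ≠ B' → Even ((B ∩ B').card) := by
    intro B hB B' hB' hne
    obtain ⟨hd, hF⟩ := hmem B hB
    obtain ⟨hd', hF'⟩ := hmem B' hB'
    have hUne : A ∪ B ≠ A ∪ B' := by
      intro h
      apply hne
      have : (A ∪ B) \ A = (A ∪ B') \ A := by rw [h]
      rwa [Finset.union_sdiff_cancel_left hd, Finset.union_sdiff_cancel_left hd'] at this
    have hint : (A ∪ B) ∩ (A ∪ B') = A ∪ (B ∩ B') := by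
      ext x; simp only [Finset.mem_inter, Finset.mem_union]; tauto
    have hdisjint : Disjoint A (B ∩ B') :=
      hd.mono_right Finset.inter_subset_left
    have hne2 := havoid _ hF _ hF' hUne
    rw [hint, Finset.card_union_of_disjoint hdisjint, hA] at hne2
    have h1 : (B ∩ B').card ≠ 1 := by omega
    have h3 : (B ∩ B').card ≤ 3 := (hcard3 B hB) ▸ Finset.card_le_card Finset.inter_subset_left
    have hne3 : (B ∩ B').card ≠ 3 := by
      intro h
      apply hne
      have e1 : B ∩ B' = B := Finset.eq_of_subset_of_card_le Finset.inter_subset_left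
        (by rw [h, hcard3 B hB])
      have e2 : B ∩ B' = B' := Finset.eq_of_subset_of_card_le Finset.inter_subset_right
        (by rw [h, hcard3 B' hB'])
      rw [← e1, e2]
    interval_cases h : (B ∩ B').card <;> simp_all <;> decide
  refine ⟨hcard3, heven, ?_⟩
  -- linear algebra bound
  classical
  set α := {x : Fin n // x ∉ A}
  set v : Finset (Fin n) → α → ZMod 2 := fun B x => if x.1 ∈ B then 1 else 0 with hv
  have hdot : ∀ B ∈ L, ∀ B' ∈ L, ∑ x : α, v B x * v B' x = ((B ∩ B').card : ZMod 2) := by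
    intro B hB B' hB' 
    have hd := (hmem B hB).1
    have : ∑ x : α, v B x * v B' x = ∑ x : α, if x.1 ∈ B ∩ B' then (1 : ZMod 2) else 0 := by
      apply Finset.sum_congr rfl
      intro x _
      by_cases h1 : x.1 ∈ B <;> by_cases h2 : x.1 ∈ B' <;> simp [hv, h1, h2]
    rw [this, ← Finset.sum_subtype Aᶜ (fun x => by simp) (fun y => if y ∈ B ∩ B' then (1 : ZMod 2) else 0),
      Finset.sum_boole, Finset.filter_mem_eq_inter,
      Finset.inter_eq_right.mpr (fun x hx => Finset.mem_compl.mpr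
        (Finset.disjoint_right.mp hd (Finset.mem_inter.mp hx).1))]
  have hLI : LinearIndependent (ZMod 2) (fun B : {B // B ∈ L} => v B.1) := by
    apply linIndep_of_dot
    · rintro ⟨B, hB⟩
      rw [hdot B hB B hB, Finset.inter_self, hcard3 B hB]
      decide
    · rintro ⟨B, hB⟩ ⟨B', hB'⟩ hne
      have hne' : B ≠ B' := fun h => hne (by simpa using h)
      rw [hdot B hB B' hB']
      obtain ⟨m, hm⟩ := heven B hB B' hB' hne'
      rw [hm]
      push_cast
      ring_nf
      rw [show (2 : ZMod 2) = 0 from rfl, mul_zero]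
  have hfr : Module.finrank (ZMod 2) (α → ZMod 2) = n - (k - 3) := by
    rw [Module.finrank_pi, Fintype.card_subtype]
    have : Finset.filter (fun x => x ∉ A) Finset.univ = Aᶜ := by
      ext x; simp
    rw [this, Finset.card_compl, hA]
    simp
  have hcard := hLI.fintype_card_le_finrank
  rw [hfr, Fintype.card_coe] at hcard
  omega
end

section
/- Let F be a family of k-element subsets of [n] with |A ∩ B| ≠ k−2 for all distinct A, B ∈ F, where k ≥ 4. Then |F| ≤ (n−k+3)·C(n,k−3)/C(k,k−3). -/
open Finset

lemma sum_ind {α : Type*} [DecidableEq α] (U W : Finset α) (hW : W ⊆ U) :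
    (∑ x : ↥U, (if ↑x ∈ W then (1 : ZMod 2) else 0)) = (W.card : ZMod 2) := by
  rw [← Finset.sum_subtype U (fun _ => Iff.rfl) (fun x => if x ∈ W then (1 : ZMod 2) else 0)]
  rw [Finset.sum_boole, Finset.filter_mem_eq_inter, Finset.inter_eq_right.mpr hW]

lemma oddtown_sub {α : Type*} [DecidableEq α] (U : Finset α) (L : Finset (Finset α))
    (hsub : ∀ S ∈ L, S ⊆ U)
    (hodd : ∀ S ∈ L, Odd S.card)
    (heven : ∀ S ∈ L, ∀ T ∈ L, S ≠ T → Even ((S ∩ T).card)) :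
    L.card ≤ U.card := by
  classical
  set v : ↥L → (↥U → ZMod 2) := fun S x => if ↑x ∈ (S : Finset α) then 1 else 0 with hv
  have hip : ∀ S T : ↥L, (∑ x : ↥U, v S x * v T x) = (((S : Finset α) ∩ T).card : ZMod 2) := by
    intro S T
    have h1 : ∀ x : ↥U, v S x * v T x
        = if ↑x ∈ (S : Finset α) ∩ (T : Finset α) then 1 else 0 := by
      intro x
      simp only [hv, mem_inter]
      split_ifs <;> simp_all
    rw [Finset.sum_congr rfl (fun x _ => h1 x)]
    exact sum_ind U _ (fun x hx => hsub S S.2 (Finset.mem_inter.mp hx).1)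
  have hdiag : ∀ S T : ↥L, (∑ x : ↥U, v S x * v T x) = if S = T then 1 else 0 := by
    intro S T
    rw [hip]
    by_cases h : S = T
    · subst h
      simp only [if_pos rfl, Finset.inter_self]
      obtain ⟨m, hm⟩ := hodd S S.2
      rw [hm]; push_cast
      rw [show ((2:ZMod 2)) = 0 by decide]; ring
    · rw [if_neg h]
      obtain ⟨m, hm⟩ := heven S S.2 T T.2 (fun he => h (Subtype.ext he))
      rw [hm]; push_cast
      rw [← two_mul, show ((2:ZMod 2)) = 0 by decide, zero_mul]
  have hli : LinearIndependent (ZMod 2) v := by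
    rw [linearIndependent_iff']
    intro s g hsum j hj
    have h0 : (∑ x : ↥U, (∑ i ∈ s, g i • v i) x * v j x) = 0 := by
      rw [hsum]; simp
    have h1 : (∑ x : ↥U, (∑ i ∈ s, g i • v i) x * v j x)
        = ∑ i ∈ s, g i * (∑ x : ↥U, v i x * v j x) := by
      simp only [Finset.sum_apply, Pi.smul_apply, smul_eq_mul, Finset.sum_mul]
      rw [Finset.sum_comm]
      simp only [Finset.mul_sum, mul_assoc]
    rw [h1] at h0
    have h2 : ∀ i ∈ s, g i * (∑ x : ↥U, v i x * v j x) = if i = j then g i else 0 := by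
      intro i _
      rw [hdiag]
      split_ifs <;> simp
    rw [Finset.sum_congr rfl h2, Finset.sum_ite_eq' s j g, if_pos hj] at h0
    exact h0
  have := hli.fintype_card_le_finrank
  simpa only [Module.finrank_pi, Fintype.card_coe] using this

/-- If `F` is a family of `k`-subsets of `[n]` (`k ≥ 4`) with `|S ∩ T| ≠ k - 2`
for all distinct `S, T ∈ F`, then `C(k, k-3) · |F| ≤ C(n, k-3) · (n - k + 3)`,
i.e. `|F| ≤ (n-k+3)·C(n,k-3)/C(k,k-3)`. -/
theorem forbidden_intersection_bound (n k : ℕ) (hk : 4 ≤ k)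
    (F : Finset (Finset (Fin n)))
    (huniform : ∀ S ∈ F, S.card = k)
    (havoid : ∀ S ∈ F, ∀ T ∈ F, S ≠ T → (S ∩ T).card ≠ k - 2) :
    Nat.choose k (k - 3) * F.card ≤ Nat.choose n (k - 3) * (n - k + 3) := by
  classical
  set 𝒜 : Finset (Finset (Fin n)) := (Finset.univ : Finset (Fin n)).powersetCard (k - 3) with h𝒜
  -- double counting
  have hcount : ∑ A ∈ 𝒜, (F.filter fun S => A ⊆ S).card = Nat.choose k (k - 3) * F.card := by
    simp only [Finset.card_filter]
    rw [Finset.sum_comm]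
    rw [Finset.sum_congr rfl (fun S hS => ?_), Finset.sum_const, smul_eq_mul, mul_comm]
    have h2 : (𝒜.filter fun A => A ⊆ S) = S.powersetCard (k - 3) := by
      ext A
      simp only [h𝒜, Finset.mem_filter, Finset.mem_powersetCard, Finset.subset_univ, true_and]
      tauto
    calc ∑ A ∈ 𝒜, (if A ⊆ S then 1 else 0)
        = (𝒜.filter fun A => A ⊆ S).card := by rw [Finset.card_filter]
      _ = Nat.choose k (k - 3) := by rw [h2, Finset.card_powersetCard, huniform S hS]
  -- link bound
  have hlink : ∀ A ∈ 𝒜, (F.filter fun S => A ⊆ S).card ≤ n - k + 3 := by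
    intro A hA
    have hAcard : A.card = k - 3 := by
      rw [h𝒜, Finset.mem_powersetCard] at hA; exact hA.2
    set L := (F.filter fun S => A ⊆ S).image (fun S => S \ A) with hL
    have hinj : Set.InjOn (fun S => S \ A) (F.filter fun S => A ⊆ S) := by
      intro S hS T hT h
      simp only [Finset.coe_filter, Set.mem_setOf_eq] at hS hT
      have h2 : S \ A ∪ A = T \ A ∪ A := by simp only at h; rw [h]
      rwa [Finset.sdiff_union_of_subset hS.2, Finset.sdiff_union_of_subset hT.2] at h2
    have hcardL : L.card = (F.filter fun S => A ⊆ S).card :=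
      Finset.card_image_of_injOn hinj
    have hmemL : ∀ B ∈ L, ∃ S, (S ∈ F ∧ A ⊆ S) ∧ B = S \ A := by
      intro B hB
      rw [hL, Finset.mem_image] at hB
      obtain ⟨S, hS, rfl⟩ := hB
      rw [Finset.mem_filter] at hS
      exact ⟨S, hS, rfl⟩
    have key : L.card ≤ Aᶜ.card := by
      apply oddtown_sub
      · intro B hB
        obtain ⟨S, hS, rfl⟩ := hmemL B hB
        intro x hx
        rw [Finset.mem_sdiff] at hx
        simpa using hx.2
      · intro B hB
        obtain ⟨S, hS, rfl⟩ := hmemL B hB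
        rw [Finset.card_sdiff_of_subset hS.2, huniform S hS.1, hAcard]
        refine ⟨1, by omega⟩
      · intro B hB C hC hne
        obtain ⟨S, hS, rfl⟩ := hmemL B hB
        obtain ⟨T, hT, rfl⟩ := hmemL C hC
        have hST : S ≠ T := fun h => hne (by rw [h])
        have hBC : (S \ A) ∩ (T \ A) = (S ∩ T) \ A := by
          ext x
          simp only [Finset.mem_inter, Finset.mem_sdiff]
          tauto
        rw [hBC, Finset.card_sdiff_of_subset (Finset.subset_inter hS.2 hT.2)]
        have h1 : k - 3 ≤ (S ∩ T).card := by
          rw [← hAcard]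
          exact Finset.card_le_card (Finset.subset_inter hS.2 hT.2)
        have h2 : (S ∩ T).card < k := by
          rcases lt_or_eq_of_le (Finset.card_le_card (Finset.inter_subset_left (s₂ := T))) with h | h
          · rw [huniform S hS.1] at h; exact h
          · exfalso
            have h3 : S ∩ T = S := Finset.eq_of_subset_of_card_le Finset.inter_subset_left h.ge
            have h4 : S ⊆ T := by rw [← h3]; exact Finset.inter_subset_right
            exact hST (Finset.eq_of_subset_of_card_le h4
              (by rw [huniform S hS.1, huniform T hT.1]))
        have h3 := havoid S hS.1 T hT.1 hST
        rw [hAcard]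
        have h4 : (S ∩ T).card - (k - 3) = 0 ∨ (S ∩ T).card - (k - 3) = 2 := by omega
        rcases h4 with h4 | h4 <;> rw [h4] <;> decide
    rw [← hcardL]
    calc L.card ≤ Aᶜ.card := key
      _ = n - (k - 3) := by rw [Finset.card_compl, hAcard, Fintype.card_fin]
      _ ≤ n - k + 3 := by omega
  calc Nat.choose k (k - 3) * F.card = ∑ A ∈ 𝒜, (F.filter fun S => A ⊆ S).card := hcount.symm
    _ ≤ ∑ _A ∈ 𝒜, (n - k + 3) := Finset.sum_le_sum hlink
    _ = 𝒜.card * (n - k + 3) := by rw [Finset.sum_const, smul_eq_mul]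
    _ = Nat.choose n (k - 3) * (n - k + 3) := by
        rw [h𝒜, Finset.card_powersetCard, Finset.card_univ, Fintype.card_fin]
end

section
/- Let A1,...,A_{n+1} be odd-sized subsets of [n] such that the only pairs with odd-sized intersection are {A1,A2} and {A1,A3}. Then the characteristic vectors v_2,...,v_{n+1} are linearly independent in F_2^n, and moreover this configuration is impossible (leads to v1+v2+v3 = 0, contradicting odd set sizes). -/
open Finset

lemma dot_indicator {n : ℕ} (A B : Finset (Fin n)) :
    (∑ x, (if x ∈ A then (1 : ZMod 2) else 0) * (if x ∈ B then 1 else 0))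
      = ((A ∩ B).card : ZMod 2) := by
  have h : ∀ x : Fin n, (if x ∈ A then (1 : ZMod 2) else 0) * (if x ∈ B then 1 else 0)
      = if x ∈ A ∩ B then 1 else 0 := by
    intro x
    by_cases hA : x ∈ A <;> by_cases hB : x ∈ B <;> simp [hA, hB]
  rw [Finset.sum_congr rfl fun x _ => h x]
  rw [Finset.sum_ite_mem, Finset.univ_inter, Finset.sum_const, nsmul_eq_mul, mul_one]

lemma odd_cast2 {k : ℕ} (h : Odd k) : (k : ZMod 2) = 1 := by
  obtain ⟨m, rfl⟩ := h
  push_cast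
  rw [show (2 : ZMod 2) = 0 by decide]
  ring

lemma even_cast2 {k : ℕ} (h : Even k) : (k : ZMod 2) = 0 := by
  obtain ⟨m, rfl⟩ := h
  push_cast
  ring_nf
  rw [show (2 : ZMod 2) = 0 by decide]
  ring

lemma orthonormal_li {m n : ℕ} (w : Fin m → (Fin n → ZMod 2))
    (h : ∀ i j, (∑ x, w i x * w j x) = if i = j then 1 else 0) :
    LinearIndependent (ZMod 2) w := by
  rw [Fintype.linearIndependent_iff]
  intro c hc j
  have h0 : (∑ x, (∑ i, c i • w i) x * w j x) = 0 := by rw [hc]; simp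
  have h1 : (∑ x, (∑ i, c i • w i) x * w j x) = ∑ i, c i * (∑ x, w i x * w j x) := by
    simp only [Finset.sum_apply, Pi.smul_apply, smul_eq_mul, Finset.sum_mul, mul_assoc, Finset.mul_sum]
    rw [Finset.sum_comm]
  rw [h1] at h0
  have h2 : (∑ i, c i * (∑ x, w i x * w j x)) = c j := by
    rw [Finset.sum_congr rfl fun i _ => by rw [h i j]]
    simp
  rw [h2] at h0
  exact h0

lemma pair_eq_cases {α} [DecidableEq α] {i j a b : α} (hij : i ≠ j)
    (h : ({i, j} : Finset α) = {a, b}) : (i = a ∧ j = b) ∨ (i = b ∧ j = a) := by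
  have hi : i ∈ ({a, b} : Finset α) := h ▸ Finset.mem_insert_self i {j}
  have hj : j ∈ ({a, b} : Finset α) :=
    h ▸ Finset.mem_insert_of_mem (Finset.mem_singleton_self j)
  simp only [Finset.mem_insert, Finset.mem_singleton] at hi hj
  rcases hi with hi | hi <;> rcases hj with hj | hj <;> simp_all

/-- Case 2 of Theorem 1.3: if `A₁,…,A_{n+1}` are odd-sized subsets of `[n]`
whose only odd-intersecting pairs are `{A₁,A₂}` and `{A₁,A₃}` (indices `0,1`
and `0,2` here), then `v₂,…,v_{n+1}` are linearly independent over `𝔽₂`, and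
moreover the configuration is impossible. -/
theorem case_two_impossible (n : ℕ) (hn : 2 ≤ n)
    (A : Fin (n + 1) → Finset (Fin n))
    (hodd : ∀ i, Odd (A i).card)
    (h01 : Odd ((A 0 ∩ A 1).card))
    (h02 : Odd ((A 0 ∩ A 2).card))
    (heven : ∀ i j : Fin (n + 1), i ≠ j →
      ({i, j} : Finset (Fin (n + 1))) ≠ {0, 1} →
      ({i, j} : Finset (Fin (n + 1))) ≠ {0, 2} →
      Even ((A i ∩ A j).card)) :
    LinearIndependent (ZMod 2)
      (fun i : Fin n =>
        (fun x : Fin n => if x ∈ A i.succ then (1 : ZMod 2) else 0)) ∧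
    False := by
  suffices hF : False from ⟨hF.elim, hF⟩
  obtain ⟨m, rfl⟩ : ∃ m, n = m + 2 := ⟨n - 2, by omega⟩
  have ne01 : (0 : Fin (m + 2 + 1)) ≠ 1 := by
    show (0 : Fin (m + 3)) ≠ 1; simp [Fin.ext_iff]
  have ne02 : (0 : Fin (m + 2 + 1)) ≠ 2 := by
    show (0 : Fin (m + 3)) ≠ 2; simp [Fin.ext_iff, Nat.mod_eq_of_lt (show 2 < m + 3 by omega)]
  have ne12 : (1 : Fin (m + 2 + 1)) ≠ 2 := by
    show (1 : Fin (m + 3)) ≠ 2; simp [Fin.ext_iff, Nat.mod_eq_of_lt (show 2 < m + 3 by omega)]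
  set v : Fin (m + 2 + 1) → Fin (m + 2) → ZMod 2 :=
    fun i x => if x ∈ A i then 1 else 0 with hv
  have dotv : ∀ i j, (∑ x, v i x * v j x) = ((A i ∩ A j).card : ZMod 2) :=
    fun i j => dot_indicator (A i) (A j)
  have d_self : ∀ i, ((A i ∩ A i).card : ZMod 2) = 1 := fun i => by
    rw [Finset.inter_self]; exact odd_cast2 (hodd i)
  have d01 : ((A 0 ∩ A 1).card : ZMod 2) = 1 := odd_cast2 h01
  have d02 : ((A 0 ∩ A 2).card : ZMod 2) = 1 := odd_cast2 h02
  have d10 : ((A 1 ∩ A 0).card : ZMod 2) = 1 := by rw [Finset.inter_comm]; exact d01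
  have d20 : ((A 2 ∩ A 0).card : ZMod 2) = 1 := by rw [Finset.inter_comm]; exact d02
  have d_other : ∀ i j : Fin (m + 2 + 1), i ≠ j → ¬(i = 0 ∧ j = 1) → ¬(i = 1 ∧ j = 0) →
      ¬(i = 0 ∧ j = 2) → ¬(i = 2 ∧ j = 0) → ((A i ∩ A j).card : ZMod 2) = 0 := by
    intro i j hij n1 n2 n3 n4
    apply even_cast2
    apply heven i j hij
    · intro h; rcases pair_eq_cases hij h with ⟨h1, h2⟩ | ⟨h1, h2⟩
      · exact n1 ⟨h1, h2⟩
      · exact n2 ⟨h1, h2⟩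
    · intro h; rcases pair_eq_cases hij h with ⟨h1, h2⟩ | ⟨h1, h2⟩
      · exact n3 ⟨h1, h2⟩
      · exact n4 ⟨h1, h2⟩
  have D12 : ((A 1 ∩ A 2).card : ZMod 2) = 0 :=
    d_other 1 2 ne12 (fun h => ne01 h.1.symm) (fun h => ne02 h.2.symm)
      (fun h => ne01 h.1.symm) (fun h => ne12 h.1)
  have D21 : ((A 2 ∩ A 1).card : ZMod 2) = 0 :=
    d_other 2 1 ne12.symm (fun h => ne02 h.1.symm) (fun h => ne12 h.1.symm)
      (fun h => ne02 h.1.symm) (fun h => ne01 h.2.symm)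
  set w : Fin (m + 2 + 1) → Fin (m + 2) → ZMod 2 :=
    fun i => if i = 0 then v 0 + v 1 + v 2 else v i with hw
  have w0 : w 0 = v 0 + v 1 + v 2 := by rw [hw]; simp
  have wne : ∀ j, j ≠ 0 → w j = v j := by intro j hj; rw [hw]; simp [hj]
  have expandL : ∀ f g h k : Fin (m + 2) → ZMod 2,
      (∑ x, (f + g + h) x * k x)
        = (∑ x, f x * k x) + (∑ x, g x * k x) + (∑ x, h x * k x) := by
    intro f g h k; simp [add_mul, Finset.sum_add_distrib]
  have expandR : ∀ k f g h : Fin (m + 2) → ZMod 2,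
      (∑ x, k x * (f + g + h) x)
        = (∑ x, k x * f x) + (∑ x, k x * g x) + (∑ x, k x * h x) := by
    intro k f g h; simp [mul_add, Finset.sum_add_distrib]
  have key : ∀ i j, (∑ x, w i x * w j x) = if i = j then 1 else 0 := by
    intro i j
    by_cases hi : i = 0 <;> by_cases hj : j = 0
    · subst hi; subst hj
      rw [w0, expandL, expandR, expandR, expandR,
        dotv, dotv, dotv, dotv, dotv, dotv, dotv, dotv, dotv,
        d_self 0, d01, d02, d10, d_self 1, D12, d20, D21, d_self 2, if_pos rfl]
      decide
    · subst hi
      rw [w0, wne j hj, expandL, dotv, dotv, dotv, if_neg (fun h => hj h.symm)]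
      by_cases hj1 : j = 1
      · subst hj1; rw [d01, d_self, D21]; decide
      · by_cases hj2 : j = 2
        · subst hj2; rw [d02, D12, d_self]; decide
        · rw [d_other 0 j (fun h => hj h.symm) (fun h => hj1 h.2) (fun h => ne01 h.1)
              (fun h => hj2 h.2) (fun h => ne02 h.1),
            d_other 1 j (fun h => hj1 h.symm) (fun h => ne01 h.1.symm) (fun h => hj h.2)
              (fun h => ne01 h.1.symm) (fun h => ne12 h.1),
            d_other 2 j (fun h => hj2 h.symm) (fun h => ne02 h.1.symm) (fun h => ne12 h.1.symm)
              (fun h => ne02 h.1.symm) (fun h => hj h.2)]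
          decide
    · subst hj
      rw [w0, wne i hi, expandR, dotv, dotv, dotv, if_neg hi]
      by_cases hi1 : i = 1
      · subst hi1; rw [d10, d_self, D12]; decide
      · by_cases hi2 : i = 2
        · subst hi2; rw [d20, D21, d_self]; decide
        · rw [d_other i 0 hi (fun h => hi h.1) (fun h => hi1 h.1) (fun h => hi h.1)
              (fun h => hi2 h.1),
            d_other i 1 (fun h => hi1 h) (fun h => hi h.1) (fun h => hi1 h.1)
              (fun h => hi h.1) (fun h => hi2 h.1),
            d_other i 2 (fun h => hi2 h) (fun h => hi h.1) (fun h => hi1 h.1)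
              (fun h => hi h.1) (fun h => hi2 h.1)]
          decide
    · rw [wne i hi, wne j hj, dotv]
      by_cases hij : i = j
      · subst hij; rw [if_pos rfl, d_self]
      · rw [if_neg hij,
          d_other i j hij (fun h => hi h.1) (fun h => hj h.2) (fun h => hi h.1)
            (fun h => hj h.2)]
  have li : LinearIndependent (ZMod 2) w := orthonormal_li w key
  have hle := li.fintype_card_le_finrank
  rw [Module.finrank_fintype_fun_eq_card] at hle
  simp [Fintype.card_fin] at hle
end
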